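/- arXiv:1512.08476 — 3 statements merged into one kernel-verified Lean document; each statement's English description precedes it below -/
import Mathlib

section
/- Let T be a bounded linear operator on L² which is an integral operator induced by a kernel 𝐓 that is a K⁰-kernel, and let λ ∈ ℂ be a regular value for T. Then a resolvent kernel 𝐓_{|λ} for 𝐓 at λ exists, and it is a kernel of the Fredholm resolvent of T at λ; that is, (T_{|λ}f)(s) = ∫ 𝐓_{|λ}(s,t) f(t) dt for every f ∈ L² and almost every s ∈ ℝ. -/
open MeasureTheory Filter Topology ContinuousLinearMap
open scoped ENNReal NNReal

noncomputable section

/-- `L²(ℝ)`, the complex Hilbert space of square-integrable functions on `ℝ`. -/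
abbrev L2 : Type := MeasureTheory.Lp ℂ 2 (MeasureTheory.volume : MeasureTheory.Measure ℝ)

/-- Bounded linear operators on `L²`. -/
abbrev L2op : Type := L2 →L[ℂ] L2

/-- `T` is the integral operator induced by the kernel `K`:
`(Tf)(s) = ∫ K(s,t) f(t) dt` for every `f ∈ L²` and almost every `s`. -/
def IsInducedBy (T : L2op) (K : ℝ → ℝ → ℂ) : Prop :=
  ∀ f : L2, ∀ᵐ s : ℝ, (T f : ℝ → ℂ) s = ∫ t : ℝ, K s t * (f : ℝ → ℂ) t

/-- `K` is a `K⁰`-kernel with associated Carleman functions `kt`, `kt'`: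
`kt s = conj (K s ·)` and `kt' s = K · s` as elements of `L²`, the kernel is
continuous and vanishes at infinity, and both Carleman functions are continuous
and vanish at infinity in `L²`-norm. -/
structure IsK0Kernel (K : ℝ → ℝ → ℂ) (kt kt' : ℝ → L2) : Prop where
  repr_t : ∀ s : ℝ, (kt s : ℝ → ℂ) =ᵐ[volume] fun x => (starRingEnd ℂ) (K s x)
  repr_t' : ∀ s : ℝ, (kt' s : ℝ → ℂ) =ᵐ[volume] fun x => K x s
  cont : Continuous fun p : ℝ × ℝ => K p.1 p.2
  vanish : Tendsto (fun p : ℝ × ℝ => K p.1 p.2) (cocompact (ℝ × ℝ)) (𝓝 0)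
  cont_t : Continuous kt
  vanish_t : Tendsto kt (cocompact ℝ) (𝓝 0)
  cont_t' : Continuous kt'
  vanish_t' : Tendsto kt' (cocompact ℝ) (𝓝 0)

/-- The set `Π(T)` of regular values of `T`: those `λ` for which `I - λT` is invertible. -/
def regularSet (T : L2op) : Set ℂ := {lam : ℂ | IsUnit (1 - lam • T)}

/-- The resolvent `R_λ(T) = (I - λT)⁻¹` (junk value `0` if `λ ∉ Π(T)`). -/
def res (T : L2op) (lam : ℂ) : L2op := Ring.inverse (1 - lam • T)

/-- The Fredholm resolvent `T_{|λ} = T R_λ(T)`. -/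
def fres (T : L2op) (lam : ℂ) : L2op := T * res T lam

/-- The region of boundedness `∇_b({Sₙ})`. -/
def nablaB (S : ℕ → L2op) : Set ℂ :=
  {ζ : ℂ | ζ ≠ 0 ∧ ∃ M : ℝ, 0 < M ∧ ∃ N : ℕ, ∀ n > N,
      ζ ∈ regularSet (S n) ∧ ‖fres (S n) ζ‖ ≤ M}

/-- The region of strong convergence `∇_s({Sₙ})`: the `ζ ∈ ∇_b({Sₙ})` such that
the Fredholm resolvents `S_{n|ζ}` converge in the strong operator topology. -/
def nablaS (S : ℕ → L2op) : Set ℂ :=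
  {ζ : ℂ | ζ ∈ nablaB S ∧
    ∀ f : L2, ∃ g : L2, Tendsto (fun n => fres (S n) ζ f) atTop (𝓝 g)}

/-- Nuclear (trace class) operator on `L²`. -/
def IsNuclear (T : L2op) : Prop :=
  ∃ g h : ℕ → L2, Summable (fun k => ‖g k‖ * ‖h k‖) ∧
    ∀ f : L2, T f = ∑' k : ℕ, (inner ℂ f (g k) : ℂ) • h k

/-- The characteristic function `χ` of the interval `(-τ, τ)`, with complex values. -/
def chi (t : ℝ) (x : ℝ) : ℂ := Set.indicator (Set.Ioo (-t) t) 1 x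

/-- Condition (iv) for a `K⁰`-kernel `K` inducing `T`: the positive reals `τ n`
strictly increase to `+∞`, `P n` is the orthogonal projection given by multiplication
by `χₙ = chi (τ n)`, the subkernels `Kₙ(s,t) = χₙ(s)K(s,t)` and
`K̃ₙ(s,t) = χₙ(s)K(s,t)χₙ(t)` are `K⁰`-kernels, and the induced operators
`Tₙ = PₙT` and `T̃ₙ = PₙTPₙ` are nuclear. -/
structure ConditionIV (K : ℝ → ℝ → ℂ) (T : L2op) (tau : ℕ → ℝ) (P : ℕ → L2op) : Prop where
  pos : ∀ n, 0 < tau n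
  mono : StrictMono tau
  tendsto_top : Tendsto tau atTop atTop
  proj : ∀ n, ∀ f : L2, (P n f : ℝ → ℂ) =ᵐ[volume] fun x => chi (tau n) x * (f : ℝ → ℂ) x
  subker : ∀ n, ∃ kt kt' : ℝ → L2, IsK0Kernel (fun s t => chi (tau n) s * K s t) kt kt'
  subker' : ∀ n, ∃ kt kt' : ℝ → L2,
      IsK0Kernel (fun s t => chi (tau n) s * K s t * chi (tau n) t) kt kt'
  nuclear : ∀ n, IsNuclear (P n * T)
  nuclear' : ∀ n, IsNuclear (P n * T * P n)

/-- `λₙ(λ) = λ(1 - βₙλ)⁻¹`. -/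
def lamn (b : ℕ → ℂ) (lam : ℂ) (n : ℕ) : ℂ := lam * (1 - b n * lam)⁻¹

/-- The resolvent kernel for `K` at `λ` built from the resolvent Carleman function
`𝐭'_{|λ}(t) = R_λ(T)(kt' t)`:  `𝐓_{|λ}(s,t) = λ⟨𝐭'_{|λ}(t), 𝐭(s)⟩ + 𝐓(s,t)`
(the paper's inner ℂ product `⟨a,b⟩ = ∫ a conj b` is `inner ℂ b a` in Mathlib). -/
def resKer (T : L2op) (K : ℝ → ℝ → ℂ) (kt kt' : ℝ → L2) (lam : ℂ) (s t : ℝ) : ℂ :=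
  lam * (inner ℂ (kt s) (res T lam (kt' t)) : ℂ) + K s t

/-- The resolvent kernel for the subkernel `Kₙ` at `λ`:
`𝐓_{n|λ}(s,t) = λ χₙ(s) ⟨𝐭'_{n|λ}(t), 𝐭(s)⟩ + 𝐓ₙ(s,t)`, where
`𝐭'_{n|λ}(t) = R_λ(Tₙ) Pₙ (kt' t)` and `𝐓ₙ(s,t) = χₙ(s) 𝐓(s,t)`. -/
def resKerN (T : L2op) (K : ℝ → ℝ → ℂ) (kt kt' : ℝ → L2) (taun : ℝ) (Pn : L2op)
    (lam : ℂ) (s t : ℝ) : ℂ :=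
  lam * chi taun s * (inner ℂ (kt s) (res (Pn * T) lam (Pn (kt' t))) : ℂ) + chi taun s * K s t

/-- `R` is a resolvent kernel for the `K⁰`-kernel `K` at `λ` (Definition 2 of the paper):
`R` is a `K⁰`-kernel satisfying the two simultaneous integral equations and the
square-integrability condition. -/
def IsResolventKernel (K : ℝ → ℝ → ℂ) (lam : ℂ) (R : ℝ → ℝ → ℂ) : Prop :=
  (∃ rt rt' : ℝ → L2, IsK0Kernel R rt rt') ∧
  (∀ s t : ℝ, R s t - lam * ∫ x : ℝ, K s x * R x t = K s t) ∧
  (∀ s t : ℝ, R s t - lam * ∫ x : ℝ, R s x * K x t = K s t) ∧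
  (∀ f : L2, ∫⁻ s : ℝ, ((‖∫ t : ℝ, R s t * (f : ℝ → ℂ) t‖₊ : ℝ≥0) : ℝ≥0∞) ^ 2 < ⊤)

section AuxProofs

lemma aux_exists_bound (k : ℝ → L2) (hc : Continuous k)
    (hv : Tendsto k (cocompact ℝ) (𝓝 0)) :
    ∃ C : ℝ, 0 ≤ C ∧ ∀ s, ‖k s‖ ≤ C := by
  have h1 : k ⁻¹' Metric.ball 0 1 ∈ cocompact ℝ := hv (Metric.ball_mem_nhds 0 one_pos)
  rw [Filter.mem_cocompact] at h1
  obtain ⟨t, htc, hts⟩ := h1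
  obtain ⟨C, hC⟩ := (htc.image (continuous_norm.comp hc)).bddAbove
  refine ⟨max C 1, le_trans zero_le_one (le_max_right _ _), fun s => ?_⟩
  by_cases hs : s ∈ t
  · exact le_max_of_le_left (hC (Set.mem_image_of_mem _ hs))
  · have h2 := hts hs
    simp only [Set.mem_preimage, Metric.mem_ball, dist_zero_right] at h2
    exact le_max_of_le_right h2.le

lemma aux_L2_integrableOn (g : L2) {A : Set ℝ} (hμA : volume A < ⊤) :
    IntegrableOn (g : ℝ → ℂ) A volume := by
  haveI : IsFiniteMeasure (volume.restrict A) :=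
    ⟨by simpa [Measure.restrict_apply_univ] using hμA⟩
  exact ((Lp.memLp g).restrict A).integrable one_le_two

lemma aux_reprT (T : L2op) (K : ℝ → ℝ → ℂ) (kt kt' : ℝ → L2)
    (hK : IsK0Kernel K kt kt') (hT : IsInducedBy T K) (g : L2) :
    (T g : ℝ → ℂ) =ᵐ[volume] fun s => (inner ℂ (kt s) g : ℂ) := by
  filter_upwards [hT g] with s hs
  rw [hs, MeasureTheory.L2.inner_def]
  refine (integral_congr_ae ?_).symm
  filter_upwards [hK.repr_t s] with x hx
  simp only [RCLike.inner_apply, hx, Complex.conj_conj, mul_comm]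

lemma aux_lint_holder (u v : L2) :
    ∫⁻ s, (‖(u : ℝ → ℂ) s‖₊ : ℝ≥0∞) * (‖(v : ℝ → ℂ) s‖₊ : ℝ≥0∞) ≤ (‖u‖₊ : ℝ≥0∞) * ‖v‖₊ := by
  have hpq : Real.HolderConjugate 2 2 := Real.HolderConjugate.two_two
  have h := ENNReal.lintegral_mul_le_Lp_mul_Lq volume hpq
      ((Lp.aestronglyMeasurable u).enorm) ((Lp.aestronglyMeasurable v).enorm)
  refine le_trans (le_of_eq ?_) (h.trans (le_of_eq ?_))
  · rfl
  · congr 1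
    · rw [← enorm_eq_nnnorm, Lp.enorm_def, eLpNorm_eq_lintegral_rpow_enorm_toReal two_ne_zero ENNReal.ofNat_ne_top]
      norm_num
    · rw [← enorm_eq_nnnorm, Lp.enorm_def, eLpNorm_eq_lintegral_rpow_enorm_toReal two_ne_zero ENNReal.ofNat_ne_top]
      norm_num

lemma aux_sq_lintegral_lt_top (g : L2) :
    ∫⁻ s, ((‖(g : ℝ → ℂ) s‖₊ : ℝ≥0) : ℝ≥0∞) ^ 2 < ⊤ := by
  have h := Lp.eLpNorm_lt_top g
  rw [eLpNorm_eq_lintegral_rpow_enorm_toReal two_ne_zero ENNReal.ofNat_ne_top] at h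
  have h2 : (2 : ℝ≥0∞).toReal = (2 : ℝ) := by norm_num
  rw [h2] at h
  rw [ENNReal.rpow_lt_top_iff_of_pos (by norm_num : (0:ℝ) < 1/2)] at h
  simpa [ENNReal.rpow_two, enorm_eq_nnnorm] using h

end AuxProofs
lemma aux_reprTadj (T : L2op) (K : ℝ → ℝ → ℂ) (kt kt' : ℝ → L2)
    (hK : IsK0Kernel K kt kt') (hT : IsInducedBy T K) (h : L2) :
    ((ContinuousLinearMap.adjoint T) h : ℝ → ℂ) =ᵐ[volume]
      fun x => (inner ℂ (kt' x) h : ℂ) := by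
  obtain ⟨C, hC0, hC⟩ := aux_exists_bound kt' hK.cont_t' hK.vanish_t'
  have hφc : Continuous fun x : ℝ => (inner ℂ (kt' x) h : ℂ) :=
    Continuous.inner hK.cont_t' continuous_const
  apply ae_eq_of_forall_setIntegral_eq_of_sigmaFinite
  · exact fun A hA hμA => aux_L2_integrableOn _ hμA
  · intro A hA hμA
    haveI : IsFiniteMeasure (volume.restrict A) :=
      ⟨by simpa [Measure.restrict_apply_univ] using hμA⟩
    refine Integrable.mono' (integrable_const (C * ‖h‖)) hφc.aestronglyMeasurable.restrict ?_
    exact ae_of_all _ fun x =>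
      le_trans (norm_inner_le_norm _ _) (mul_le_mul_of_nonneg_right (hC x) (norm_nonneg _))
  · intro A hA hμA
    set f : L2 := indicatorConstLp 2 hA hμA.ne (1:ℂ) with hfdef
    have hfcoe : (f : ℝ → ℂ) =ᵐ[volume] A.indicator fun _ => (1:ℂ) :=
      indicatorConstLp_coeFn
    set G : ℝ → ℝ → ℂ :=
      fun s x => A.indicator (fun _ => (1:ℂ)) x * (starRingEnd ℂ) (K s x) with hGdef
    set F : ℝ → ℝ → ℂ := fun s x => G s x * (h : ℝ → ℂ) s with hFdef
    -- Integrability on the product, for Fubini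
    have hFmeas : AEStronglyMeasurable (Function.uncurry F) (volume.prod volume) := by
      have m1 : AEStronglyMeasurable (fun p : ℝ × ℝ => A.indicator (fun _ => (1:ℂ)) p.2)
          (volume.prod volume) :=
        ((measurable_const.indicator hA).comp measurable_snd).aestronglyMeasurable
      have m2 : AEStronglyMeasurable (fun p : ℝ × ℝ => (starRingEnd ℂ) (K p.1 p.2))
          (volume.prod volume) :=
        (Complex.continuous_conj.comp hK.cont).aestronglyMeasurable
      have m3 : AEStronglyMeasurable (fun p : ℝ × ℝ => (h : ℝ → ℂ) p.1)
          (volume.prod volume) := (Lp.aestronglyMeasurable h).comp_fst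
      exact ((m1.mul m2).mul m3)
    have hFint : Integrable (Function.uncurry F) (volume.prod volume) := by
      refine ⟨hFmeas, ?_⟩
      rw [hasFiniteIntegral_def]
      have key : ∀ x : ℝ, (∫⁻ s, (‖F s x‖₊ : ℝ≥0∞)) ≤
          A.indicator (fun _ => ENNReal.ofReal C * (‖h‖₊ : ℝ≥0∞)) x := by
        intro x
        by_cases hxA : x ∈ A
        · have e1 : ∀ s, (‖F s x‖₊ : ℝ≥0∞) =
              (‖(K s x)‖₊ : ℝ≥0∞) * (‖(h : ℝ → ℂ) s‖₊ : ℝ≥0∞) := by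
            intro s
            simp [hFdef, hGdef, Set.indicator_of_mem hxA, nnnorm_mul, ENNReal.coe_mul]
          rw [Set.indicator_of_mem hxA]
          calc ∫⁻ s, (‖F s x‖₊ : ℝ≥0∞)
              = ∫⁻ s, (‖((kt' x : L2) : ℝ → ℂ) s‖₊ : ℝ≥0∞) * (‖(h : ℝ → ℂ) s‖₊ : ℝ≥0∞) := by
                simp_rw [e1]
                refine lintegral_congr_ae ?_
                filter_upwards [hK.repr_t' x] with s hs
                rw [hs]
            _ ≤ (‖kt' x‖₊ : ℝ≥0∞) * (‖h‖₊ : ℝ≥0∞) := aux_lint_holder (kt' x) h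
            _ ≤ ENNReal.ofReal C * (‖h‖₊ : ℝ≥0∞) := by
                refine mul_le_mul_left ?_ _
                rw [← enorm_eq_nnnorm, ← ofReal_norm_eq_enorm]
                exact ENNReal.ofReal_le_ofReal (hC x)
        · have e1 : ∀ s, F s x = 0 := by
            intro s
            simp [hFdef, hGdef, Set.indicator_of_notMem hxA]
          simp [e1]
      calc ∫⁻ p, (‖Function.uncurry F p‖₊ : ℝ≥0∞) ∂(volume.prod volume)
          = ∫⁻ x, ∫⁻ s, (‖F s x‖₊ : ℝ≥0∞) := by
            exact lintegral_prod_symm _ hFmeas.enorm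
        _ ≤ ∫⁻ x, A.indicator (fun _ => ENNReal.ofReal C * (‖h‖₊ : ℝ≥0∞)) x :=
            lintegral_mono key
        _ = (ENNReal.ofReal C * (‖h‖₊ : ℝ≥0∞)) * volume A := by
            rw [lintegral_indicator hA, setLIntegral_const]
        _ < ⊤ := by
            refine ENNReal.mul_lt_top (ENNReal.mul_lt_top ?_ ?_) hμA
            · exact ENNReal.ofReal_lt_top
            · exact ENNReal.coe_lt_top
    -- the chain of equalities
    have e1 : ∫ x in A, ((ContinuousLinearMap.adjoint T) h : ℝ → ℂ) x
        = (inner ℂ f ((ContinuousLinearMap.adjoint T) h) : ℂ) := by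
      rw [MeasureTheory.L2.inner_def, ← integral_indicator hA]
      refine integral_congr_ae ?_
      filter_upwards [hfcoe] with x hx
      by_cases hxA : x ∈ A <;>
        simp [RCLike.inner_apply, hx, hxA]
    have e2 : (inner ℂ f ((ContinuousLinearMap.adjoint T) h) : ℂ) = (inner ℂ (T f) h : ℂ) :=
      ContinuousLinearMap.adjoint_inner_right T f h
    have e5 : ∀ s, (starRingEnd ℂ) ((inner ℂ (kt s) f : ℂ)) = ∫ x, G s x := by
      intro s
      rw [inner_conj_symm f (kt s), MeasureTheory.L2.inner_def]
      refine integral_congr_ae ?_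
      filter_upwards [hfcoe, hK.repr_t s] with x hx hx2
      by_cases hxA : x ∈ A <;>
        simp [RCLike.inner_apply, hx, hx2, hxA, hGdef]
    have e3 : (inner ℂ (T f) h : ℂ) = ∫ s, (∫ x, G s x) * (h : ℝ → ℂ) s := by
      rw [MeasureTheory.L2.inner_def]
      refine integral_congr_ae ?_
      filter_upwards [aux_reprT T K kt kt' hK hT f] with s hs
      rw [RCLike.inner_apply, hs, e5 s, mul_comm]
    have e6 : ∫ s, (∫ x, G s x) * (h : ℝ → ℂ) s
        = ∫ x, A.indicator (fun y => (inner ℂ (kt' y) h : ℂ)) x := by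
      have step1 : ∀ s, (∫ x, G s x) * (h : ℝ → ℂ) s = ∫ x, F s x := by
        intro s
        rw [hFdef]
        exact (integral_mul_const _ _).symm
      simp_rw [step1]
      rw [MeasureTheory.integral_integral_swap hFint]
      refine integral_congr_ae (ae_of_all _ fun x => ?_)
      by_cases hxA : x ∈ A
      · have : ∀ s, F s x = (starRingEnd ℂ) (K s x) * (h : ℝ → ℂ) s := by
          intro s; simp [hFdef, hGdef, Set.indicator_of_mem hxA]
        simp_rw [this]
        rw [Set.indicator_of_mem hxA]
        rw [MeasureTheory.L2.inner_def]
        refine (integral_congr_ae ?_).symm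
        filter_upwards [hK.repr_t' x] with s hs
        rw [RCLike.inner_apply, hs, mul_comm]
      · have : ∀ s, F s x = 0 := by
          intro s; simp [hFdef, hGdef, Set.indicator_of_notMem hxA]
        simp_rw [this]
        rw [Set.indicator_of_notMem hxA]
        simp
    rw [e1, e2, e3, e6, integral_indicator hA]
lemma aux_res_eq (T : L2op) (lam : ℂ) (hlam : lam ∈ regularSet T) :
    res T lam = 1 + lam • (T * res T lam) := by
  have h : (1 - lam • T) * res T lam = 1 := Ring.mul_inverse_cancel _ hlam
  have h2 : res T lam - lam • (T * res T lam) = 1 := by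
    have e : (1 - lam • T) * res T lam = res T lam - lam • (T * res T lam) := by
      rw [sub_mul, one_mul, smul_mul_assoc]
    rw [← e]; exact h
  rw [← h2]; abel

lemma aux_res_eq' (T : L2op) (lam : ℂ) (hlam : lam ∈ regularSet T) :
    res T lam = 1 + lam • (res T lam * T) := by
  have h : res T lam * (1 - lam • T) = 1 := Ring.inverse_mul_cancel _ hlam
  have h2 : res T lam - lam • (res T lam * T) = 1 := by
    have e : res T lam * (1 - lam • T) = res T lam - lam • (res T lam * T) := by
      rw [mul_sub, mul_one, mul_smul_comm]
    rw [← e]; exact h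
  rw [← h2]; abel

set_option maxHeartbeats 1600000 in
set_option synthInstance.maxHeartbeats 400000 in
theorem statement0 (T : L2op) (K : ℝ → ℝ → ℂ) (kt kt' : ℝ → L2)
    (hK : IsK0Kernel K kt kt') (hT : IsInducedBy T K)
    (lam : ℂ) (hlam : lam ∈ regularSet T) :
    ∃ R : ℝ → ℝ → ℂ, IsResolventKernel K lam R ∧ IsInducedBy (fres T lam) R := by
  classical
  have hres := aux_res_eq T lam hlam
  have hres' := aux_res_eq' T lam hlam
  set Rl : L2op := res T lam with hRl
  set S : L2op := ContinuousLinearMap.adjoint Rl with hS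
  set r : ℝ → L2 := fun t => Rl (kt' t) with hr
  set rt : ℝ → L2 :=
    fun s => (starRingEnd ℂ) lam • (ContinuousLinearMap.adjoint T) (S (kt s)) + kt s with hrt
  set R : ℝ → ℝ → ℂ := resKer T K kt kt' lam with hRdef
  have hRexp : ∀ s t, R s t = lam * (inner ℂ (kt s) (r t) : ℂ) + K s t := fun s t => rfl
  -- inner-product identity for rt
  have hinner : ∀ (s : ℝ) (g : L2), (inner ℂ (rt s) g : ℂ) = (inner ℂ (kt s) (Rl g) : ℂ) := by
    intro s g
    simp only [hrt]
    rw [inner_add_left, inner_smul_left, ContinuousLinearMap.adjoint_inner_left,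
      ContinuousLinearMap.adjoint_inner_left, Complex.conj_conj,
      ← inner_smul_right, ← inner_add_right]
    congr 1
    have e := congrArg (fun (M : L2op) => M g) hres'
    simp only [ContinuousLinearMap.add_apply, ContinuousLinearMap.one_apply,
      ContinuousLinearMap.smul_apply, ContinuousLinearMap.mul_apply] at e
    rw [e, add_comm]
  -- representation of r t
  have h1 : ∀ t, ((r t : L2) : ℝ → ℂ) =ᵐ[volume] fun x => R x t := by
    intro t
    have hexp : r t = kt' t + lam • (T (r t)) := by
      have e := congrArg (fun (M : L2op) => M (kt' t)) hres
      simp only [ContinuousLinearMap.add_apply, ContinuousLinearMap.one_apply,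
        ContinuousLinearMap.smul_apply, ContinuousLinearMap.mul_apply] at e
      simpa only [hr] using e
    have hmain : ((kt' t + lam • (T (r t)) : L2) : ℝ → ℂ) =ᵐ[volume] fun x => R x t := by
      filter_upwards [Lp.coeFn_add (kt' t) (lam • (T (r t))),
        Lp.coeFn_smul lam (T (r t)), hK.repr_t' t,
        aux_reprT T K kt kt' hK hT (r t)] with x ha hsm hx hTr
      rw [ha, Pi.add_apply, hsm, Pi.smul_apply, hx, hTr, hRexp x t, smul_eq_mul, add_comm]
    rw [hexp]; exact hmain
  -- representation of rt s
  have h2 : ∀ s, ((rt s : L2) : ℝ → ℂ) =ᵐ[volume] fun x => (starRingEnd ℂ) (R s x) := by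
    intro s
    have key : ∀ x, (inner ℂ (kt' x) (S (kt s)) : ℂ)
        = (starRingEnd ℂ) ((inner ℂ (kt s) (r x) : ℂ)) := by
      intro x
      have a1 : (inner ℂ (kt' x) (S (kt s)) : ℂ) = (inner ℂ (Rl (kt' x)) (kt s) : ℂ) :=
        ContinuousLinearMap.adjoint_inner_right Rl (kt' x) (kt s)
      have a2 : (starRingEnd ℂ) ((inner ℂ (kt s) (r x) : ℂ)) = (inner ℂ (r x) (kt s) : ℂ) :=
        inner_conj_symm (r x) (kt s)
      exact a1.trans a2.symm
    have hmain : (((starRingEnd ℂ) lam • (ContinuousLinearMap.adjoint T) (S (kt s)) + kt s : L2) : ℝ → ℂ)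
        =ᵐ[volume] fun x => (starRingEnd ℂ) (R s x) := by
      filter_upwards [Lp.coeFn_add ((starRingEnd ℂ) lam • (ContinuousLinearMap.adjoint T) (S (kt s))) (kt s),
        Lp.coeFn_smul ((starRingEnd ℂ) lam) ((ContinuousLinearMap.adjoint T) (S (kt s))),
        hK.repr_t s, aux_reprTadj T K kt kt' hK hT (S (kt s))] with x ha hsm hx hadj
      rw [ha, Pi.add_apply, hsm, Pi.smul_apply, hx, hadj, hRexp s x, map_add, map_mul,
        key x, smul_eq_mul]
    simp only [hrt]
    exact hmain
  -- integral computations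
  have hint2 : ∀ (s : ℝ) (g : L2), ∫ x, R s x * (g : ℝ → ℂ) x = (inner ℂ (rt s) g : ℂ) := by
    intro s g
    rw [MeasureTheory.L2.inner_def]
    refine integral_congr_ae ?_
    filter_upwards [h2 s] with x hx
    rw [RCLike.inner_apply, hx, Complex.conj_conj, mul_comm]
  have hint1 : ∀ s t, ∫ x, K s x * R x t = (inner ℂ (kt s) (r t) : ℂ) := by
    intro s t
    rw [MeasureTheory.L2.inner_def]
    refine integral_congr_ae ?_
    filter_upwards [hK.repr_t s, h1 t] with x hx hx1
    rw [RCLike.inner_apply, hx, Complex.conj_conj, hx1, mul_comm]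
  have hint2' : ∀ s t, ∫ x, R s x * K x t = (inner ℂ (kt s) (r t) : ℂ) := by
    intro s t
    have e : ∫ x, R s x * K x t = ∫ x, R s x * ((kt' t : L2) : ℝ → ℂ) x := by
      refine integral_congr_ae ?_
      filter_upwards [hK.repr_t' t] with x hx
      rw [hx]
    rw [e, hint2 s (kt' t), hinner s (kt' t)]
  -- the a.e. representation of the Fredholm resolvent
  have hae : ∀ f : L2, ∀ᵐ s : ℝ, ((fres T lam f : L2) : ℝ → ℂ) s = ∫ t, R s t * (f : ℝ → ℂ) t := by
    intro f
    have hval : ∀ s, ∫ t, R s t * (f : ℝ → ℂ) t = (inner ℂ (kt s) (Rl f) : ℂ) := by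
      intro s; rw [hint2 s f, hinner s f]
    have hfr : fres T lam f = T (Rl f) := rfl
    filter_upwards [aux_reprT T K kt kt' hK hT (Rl f)] with s hs
    rw [hfr, hs, hval s]
  -- bounds for vanishing
  obtain ⟨C, hC0, hC⟩ := aux_exists_bound kt hK.cont_t hK.vanish_t
  obtain ⟨C', hC'0, hC'⟩ := aux_exists_bound kt' hK.cont_t' hK.vanish_t'
  refine ⟨R, ⟨⟨rt, r, ?_⟩, ?_, ?_, ?_⟩, hae⟩
  · -- IsK0Kernel R rt r
    refine ⟨h2, h1, ?_, ?_, ?_, ?_, ?_, ?_⟩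
    · -- continuity
      show Continuous fun p : ℝ × ℝ => R p.1 p.2
      have : Continuous fun p : ℝ × ℝ =>
          lam * (inner ℂ (kt p.1) (Rl (kt' p.2)) : ℂ) + K p.1 p.2 :=
        (continuous_const.mul ((hK.cont_t.comp continuous_fst).inner
          (Rl.continuous.comp (hK.cont_t'.comp continuous_snd)))).add hK.cont
      exact this
    · -- vanish
      show Tendsto (fun p : ℝ × ℝ => R p.1 p.2) (cocompact (ℝ × ℝ)) (𝓝 0)
      have hg : Tendsto (fun p : ℝ × ℝ => ‖kt p.1‖ * ‖kt' p.2‖) (cocompact (ℝ × ℝ)) (𝓝 0) := by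
        rw [← Filter.coprod_cocompact]
        simp only [Filter.coprod]
        refine Filter.tendsto_sup.mpr ⟨?_, ?_⟩
        · have hbase : Tendsto (fun p : ℝ × ℝ => ‖kt p.1‖)
              ((cocompact ℝ).comap Prod.fst) (𝓝 0) := by
            have h0 : Tendsto (fun p : ℝ × ℝ => kt p.1)
                ((cocompact ℝ).comap Prod.fst) (𝓝 0) := hK.vanish_t.comp tendsto_comap
            simpa using h0.norm
          refine squeeze_zero (fun p => mul_nonneg (norm_nonneg _) (norm_nonneg _))
            (fun p => mul_le_mul_of_nonneg_left (hC' p.2) (norm_nonneg _)) ?_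
          simpa using hbase.mul_const C'
        · have hbase : Tendsto (fun p : ℝ × ℝ => ‖kt' p.2‖)
              ((cocompact ℝ).comap Prod.snd) (𝓝 0) := by
            have h0 : Tendsto (fun p : ℝ × ℝ => kt' p.2)
                ((cocompact ℝ).comap Prod.snd) (𝓝 0) := hK.vanish_t'.comp tendsto_comap
            simpa using h0.norm
          refine squeeze_zero (fun p => mul_nonneg (norm_nonneg _) (norm_nonneg _))
            (fun p => mul_le_mul_of_nonneg_right (hC p.1) (norm_nonneg _)) ?_
          simpa using hbase.const_mul C
      have hbound : ∀ p : ℝ × ℝ, ‖lam * (inner ℂ (kt p.1) (Rl (kt' p.2)) : ℂ)‖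
          ≤ (‖lam‖ * ‖Rl‖) * (‖kt p.1‖ * ‖kt' p.2‖) := by
        intro p
        rw [norm_mul]
        calc ‖lam‖ * ‖(inner ℂ (kt p.1) (Rl (kt' p.2)) : ℂ)‖
            ≤ ‖lam‖ * (‖kt p.1‖ * ‖Rl (kt' p.2)‖) :=
              mul_le_mul_of_nonneg_left (norm_inner_le_norm _ _) (norm_nonneg _)
          _ ≤ ‖lam‖ * (‖kt p.1‖ * (‖Rl‖ * ‖kt' p.2‖)) :=
              mul_le_mul_of_nonneg_left
                (mul_le_mul_of_nonneg_left (Rl.le_opNorm _) (norm_nonneg _)) (norm_nonneg _)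
          _ = (‖lam‖ * ‖Rl‖) * (‖kt p.1‖ * ‖kt' p.2‖) := by ring
      have hpart : Tendsto (fun p : ℝ × ℝ => lam * (inner ℂ (kt p.1) (Rl (kt' p.2)) : ℂ))
          (cocompact (ℝ × ℝ)) (𝓝 0) := by
        refine squeeze_zero_norm (fun p => hbound p) ?_
        simpa using hg.const_mul (‖lam‖ * ‖Rl‖)
      have hfin := hpart.add hK.vanish
      rw [add_zero] at hfin
      exact hfin
    · exact (((ContinuousLinearMap.adjoint T).continuous.comp
        (S.continuous.comp hK.cont_t)).const_smul ((starRingEnd ℂ) lam)).add hK.cont_t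
    · -- vanish rt
      show Tendsto rt (cocompact ℝ) (𝓝 0)
      have hcont : Continuous fun v : L2 =>
          (starRingEnd ℂ) lam • (ContinuousLinearMap.adjoint T) (S v) :=
        ((ContinuousLinearMap.adjoint T).continuous.comp S.continuous).const_smul ((starRingEnd ℂ) lam)
      have t1 : Tendsto (fun s : ℝ =>
          (starRingEnd ℂ) lam • (ContinuousLinearMap.adjoint T) (S (kt s)))
          (cocompact ℝ) (𝓝 0) := by
        have := (hcont.tendsto 0).comp hK.vanish_t
        simpa [Function.comp_def] using this
      have hfin := t1.add hK.vanish_t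
      rw [add_zero] at hfin
      exact hfin
    · exact Rl.continuous.comp hK.cont_t'
    · -- vanish r
      show Tendsto r (cocompact ℝ) (𝓝 0)
      have := (Rl.continuous.tendsto 0).comp hK.vanish_t'
      simpa [hr, Function.comp_def] using this
  · -- first integral equation
    intro s t
    rw [hint1 s t, hRexp s t]; ring
  · -- second integral equation
    intro s t
    rw [hint2' s t, hRexp s t]; ring
  · -- square integrability
    intro f
    have : ∫⁻ s, ((‖∫ t, R s t * (f : ℝ → ℂ) t‖₊ : ℝ≥0) : ℝ≥0∞) ^ 2
        = ∫⁻ s, ((‖((fres T lam f : L2) : ℝ → ℂ) s‖₊ : ℝ≥0) : ℝ≥0∞) ^ 2 := by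
      refine lintegral_congr_ae ?_
      filter_upwards [hae f] with s hs
      rw [hs]
    rw [this]
    exact aux_sq_lintegral_lt_top (fres T lam f)
end
end

section
/- Let T be a bounded linear operator on L² which is an integral operator induced by a kernel 𝐓 that is a K⁰-kernel, and let λ ∈ ℂ. If a resolvent kernel 𝐓_{|λ} for 𝐓 at λ exists, then λ is a regular value for T. -/
open MeasureTheory Filter Topology ContinuousLinearMap
open scoped ENNReal NNReal

noncomputable section

open ComplexConjugate

local notation "⟪" x ", " y "⟫" => @inner ℂ _ _ x y

lemma exists_bound_of_c0 {v : ℝ → L2} (hc : Continuous v)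
    (hv : Tendsto v (cocompact ℝ) (𝓝 0)) : ∃ C : ℝ, 0 ≤ C ∧ ∀ t, ‖v t‖ ≤ C := by
  have h1 : {t : ℝ | ‖v t‖ ≤ 1} ∈ cocompact ℝ := by
    have := (Metric.tendsto_nhds.mp hv) 1 one_pos
    filter_upwards [this] with t ht
    simpa [dist_zero_right] using ht.le
  obtain ⟨S, hS, hSsub⟩ := Filter.mem_cocompact.mp h1
  obtain ⟨C₀, hC₀⟩ := hS.exists_bound_of_continuousOn hc.continuousOn
  refine ⟨max C₀ 1, le_trans zero_le_one (le_max_right _ _), fun t => ?_⟩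
  by_cases ht : t ∈ S
  · exact (hC₀ t ht).trans (le_max_left _ _)
  · exact le_trans (hSsub ht) (le_max_right _ _)

lemma integral_norm_mul_norm_le (u v : L2) :
    ∫ x, ‖(u : ℝ → ℂ) x‖ * ‖(v : ℝ → ℂ) x‖ ≤ ‖u‖ * ‖v‖ := by
  set U : Lp ℝ 2 (volume : Measure ℝ) := MeasureTheory.MemLp.toLp _ ((Lp.memLp u).norm) with hUdef
  set V : Lp ℝ 2 (volume : Measure ℝ) := MeasureTheory.MemLp.toLp _ ((Lp.memLp v).norm) with hVdef
  have hU : (U : ℝ → ℝ) =ᵐ[volume] fun x => ‖(u : ℝ → ℂ) x‖ := MemLp.coeFn_toLp _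
  have hV : (V : ℝ → ℝ) =ᵐ[volume] fun x => ‖(v : ℝ → ℂ) x‖ := MemLp.coeFn_toLp _
  have hnU : ‖U‖ = ‖u‖ := by rw [hUdef, Lp.norm_toLp, eLpNorm_norm, Lp.norm_def]
  have hnV : ‖V‖ = ‖v‖ := by rw [hVdef, Lp.norm_toLp, eLpNorm_norm, Lp.norm_def]
  have h1 : ∫ x, ‖(u : ℝ → ℂ) x‖ * ‖(v : ℝ → ℂ) x‖ = @inner ℝ _ _ U V := by
    rw [L2.inner_def]
    refine integral_congr_ae ?_
    filter_upwards [hU, hV] with x h1 h2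
    simp [RCLike.inner_apply, h1, h2, mul_comm]
  rw [h1, ← hnU, ← hnV]
  exact real_inner_le_norm U V

lemma inner_eq_intg (w f : L2) (W : ℝ → ℂ)
    (hw : (w : ℝ → ℂ) =ᵐ[volume] fun x => conj (W x)) :
    ⟪w, f⟫ = ∫ t, W t * (f : ℝ → ℂ) t := by
  rw [L2.inner_def]
  refine integral_congr_ae ?_
  filter_upwards [hw] with t ht
  simp [RCLike.inner_apply, ht]
  ring

lemma inner_eq_intg2 (w v : L2) (V : ℝ → ℂ)
    (hv : (v : ℝ → ℂ) =ᵐ[volume] V) :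
    ⟪w, v⟫ = ∫ x, conj ((w : ℝ → ℂ) x) * V x := by
  rw [L2.inner_def]
  refine integral_congr_ae ?_
  filter_upwards [hv] with x hx
  simp [RCLike.inner_apply, hx]
  ring

lemma integrable_kernmul (w f : L2) (W : ℝ → ℂ)
    (hw : (w : ℝ → ℂ) =ᵐ[volume] fun x => conj (W x)) :
    Integrable (fun t => W t * (f : ℝ → ℂ) t) volume := by
  refine (L2.integrable_inner (𝕜 := ℂ) w f).congr ?_
  filter_upwards [hw] with t ht
  simp [RCLike.inner_apply, ht]
  ring

lemma integrable_conjmul (u v : L2) :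
    Integrable (fun x => conj ((u : ℝ → ℂ) x) * (v : ℝ → ℂ) x) volume := by
  refine (L2.integrable_inner (𝕜 := ℂ) u v).congr ?_
  refine Eventually.of_forall fun x => ?_
  simp [RCLike.inner_apply]
  ring

lemma key_swap (u f : L2) (hf : Integrable (f : ℝ → ℂ) volume) (V : ℝ → ℝ → ℂ)
    (hVc : Continuous fun p : ℝ × ℝ => V p.1 p.2)
    (v' : ℝ → L2)
    (hv' : ∀ t, ((v' t : L2) : ℝ → ℂ) =ᵐ[volume] fun x => V x t)
    (C : ℝ) (hC : ∀ t, ‖v' t‖ ≤ C) :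
    ∫ x, conj ((u : ℝ → ℂ) x) * ∫ t, V x t * (f : ℝ → ℂ) t
      = ∫ t, (∫ x, conj ((u : ℝ → ℂ) x) * V x t) * (f : ℝ → ℂ) t := by
  set G : ℝ → ℝ → ℂ := fun t x => conj ((u : ℝ → ℂ) x) * (V x t * (f : ℝ → ℂ) t) with hG
  have hFm : AEStronglyMeasurable (Function.uncurry G) ((volume : Measure ℝ).prod volume) := by
    apply AEStronglyMeasurable.mul
    · exact ((RCLike.continuous_conj.comp_aestronglyMeasurable
        (Lp.aestronglyMeasurable u))).comp_snd
    · exact AEStronglyMeasurable.mul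
        ((hVc.comp (continuous_snd.prodMk continuous_fst)).aestronglyMeasurable)
        ((Lp.aestronglyMeasurable f).comp_fst)
  have hslice : ∀ t : ℝ, Integrable (fun x => conj ((u : ℝ → ℂ) x) * V x t) volume := by
    intro t
    refine (integrable_conjmul u (v' t)).congr ?_
    filter_upwards [hv' t] with x hx
    rw [hx]
  have hsliceint : ∀ t : ℝ, ∫ x, ‖(u : ℝ → ℂ) x‖ * ‖V x t‖ ≤ ‖u‖ * C := by
    intro t
    have h1 : ∫ x, ‖(u : ℝ → ℂ) x‖ * ‖V x t‖
        = ∫ x, ‖(u : ℝ → ℂ) x‖ * ‖((v' t : L2) : ℝ → ℂ) x‖ := by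
      refine integral_congr_ae ?_
      filter_upwards [hv' t] with x hx
      rw [hx]
    rw [h1]
    exact le_trans (integral_norm_mul_norm_le u (v' t))
      (mul_le_mul_of_nonneg_left (hC t) (norm_nonneg _))
  have hF : Integrable (Function.uncurry G) ((volume : Measure ℝ).prod volume) := by
    refine (integrable_prod_iff hFm).2 ⟨?_, ?_⟩
    · refine Eventually.of_forall fun t => ?_
      simpa [hG, Function.uncurry, mul_assoc] using ((hslice t).mul_const ((f : ℝ → ℂ) t))
    · have hb : Integrable (fun t => (‖u‖ * C) * ‖(f : ℝ → ℂ) t‖) volume :=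
        hf.norm.const_mul _
      refine Integrable.mono' hb (hFm.norm.integral_prod_right') ?_
      refine Eventually.of_forall fun t => ?_
      rw [Real.norm_of_nonneg (integral_nonneg fun x => norm_nonneg _)]
      have hnorm : ∀ x, ‖Function.uncurry G (t, x)‖
          = (‖(u : ℝ → ℂ) x‖ * ‖V x t‖) * ‖(f : ℝ → ℂ) t‖ := by
        intro x
        simp [hG, Function.uncurry, norm_mul, mul_assoc]
      calc ∫ x, ‖Function.uncurry G (t, x)‖
          = ∫ x, (‖(u : ℝ → ℂ) x‖ * ‖V x t‖) * ‖(f : ℝ → ℂ) t‖ :=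
            integral_congr_ae (Eventually.of_forall fun x => hnorm x)
        _ = (∫ x, ‖(u : ℝ → ℂ) x‖ * ‖V x t‖) * ‖(f : ℝ → ℂ) t‖ := by
            rw [integral_mul_const]
        _ ≤ (‖u‖ * C) * ‖(f : ℝ → ℂ) t‖ :=
            mul_le_mul_of_nonneg_right (hsliceint t) (norm_nonneg _)
  have hswap := integral_integral_swap (f := G) hF
  calc ∫ x, conj ((u : ℝ → ℂ) x) * ∫ t, V x t * (f : ℝ → ℂ) t
      = ∫ x, ∫ t, G t x := by
        refine integral_congr_ae (Eventually.of_forall fun x => ?_)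
        rw [hG]
        exact (integral_const_mul _ _).symm
    _ = ∫ t, ∫ x, G t x := hswap.symm
    _ = ∫ t, (∫ x, conj ((u : ℝ → ℂ) x) * V x t) * (f : ℝ → ℂ) t := by
        refine integral_congr_ae (Eventually.of_forall fun t => ?_)
        have hx : ∀ x, G t x = (conj ((u : ℝ → ℂ) x) * V x t) * (f : ℝ → ℂ) t := by
          intro x; rw [hG]; ring
        show ∫ x, G t x = _
        rw [integral_congr_ae (Eventually.of_forall hx), integral_mul_const]

theorem statement1 (T : L2op) (K : ℝ → ℝ → ℂ) (kt kt' : ℝ → L2)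
    (hK : IsK0Kernel K kt kt') (hT : IsInducedBy T K)
    (lam : ℂ) (R : ℝ → ℝ → ℂ) (hR : IsResolventKernel K lam R) :
    lam ∈ regularSet T := by
  classical
  obtain ⟨⟨rt, rt', hRK⟩, hReq1, hReq2, hRsq⟩ := hR
  obtain ⟨C, hC0, hC⟩ := exists_bound_of_c0 hRK.cont_t' hRK.vanish_t'
  obtain ⟨C', hC'0, hC'⟩ := exists_bound_of_c0 hK.cont_t' hK.vanish_t'
  -- row representation of R
  have hrow : ∀ (x : ℝ) (f : L2), (⟪rt x, f⟫ : ℂ) = ∫ t, R x t * (f : ℝ → ℂ) t :=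
    fun x f => inner_eq_intg (rt x) f (R x) (hRK.repr_t x)
  -- the candidate inverse as a function
  have hmem : ∀ f : L2, MemLp (fun s => (⟪rt s, f⟫ : ℂ)) 2 (volume : Measure ℝ) := by
    intro f
    have hcont : Continuous fun s => (⟪rt s, f⟫ : ℂ) := hRK.cont_t.inner continuous_const
    refine ⟨hcont.aestronglyMeasurable, ?_⟩
    rw [eLpNorm_eq_lintegral_rpow_enorm_toReal (by norm_num) (by norm_num)]
    refine ENNReal.rpow_lt_top_of_nonneg (by positivity) ?_
    have h4 := hRsq f
    have he : ∫⁻ s, (‖(⟪rt s, f⟫ : ℂ)‖₊ : ℝ≥0∞) ^ ((2 : ℝ≥0∞).toReal)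
        = ∫⁻ s, ((‖∫ t, R s t * (f : ℝ → ℂ) t‖₊ : ℝ≥0) : ℝ≥0∞) ^ 2 := by
      refine lintegral_congr fun s => ?_
      rw [hrow s f]
      rw [show ((2 : ℝ≥0∞)).toReal = ((2 : ℕ) : ℝ) by norm_num, ENNReal.rpow_natCast]
    change ∫⁻ s, (‖(⟪rt s, f⟫ : ℂ)‖₊ : ℝ≥0∞) ^ ((2 : ℝ≥0∞).toReal) ≠ ⊤
    rw [he]
    exact h4.ne
  set Amap : L2 → L2 := fun f => MeasureTheory.MemLp.toLp _ (hmem f) with hAmap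
  have hAfn : ∀ f : L2, ((Amap f : L2) : ℝ → ℂ) =ᵐ[volume] fun s => (⟪rt s, f⟫ : ℂ) :=
    fun f => MemLp.coeFn_toLp (hmem f)
  -- linearity
  have hadd : ∀ f g : L2, Amap (f + g) = Amap f + Amap g := by
    intro f g
    refine Lp.ext ?_
    filter_upwards [hAfn (f + g), hAfn f, hAfn g, Lp.coeFn_add (Amap f) (Amap g)]
      with s h1 h2 h3 h4
    rw [h1, h4, Pi.add_apply, h2, h3, inner_add_right]
  have hsmul : ∀ (c : ℂ) (f : L2), Amap (c • f) = c • Amap f := by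
    intro c f
    refine Lp.ext ?_
    filter_upwards [hAfn (c • f), hAfn f, Lp.coeFn_smul c (Amap f)] with s h1 h2 h3
    rw [h1, h3, Pi.smul_apply, h2, inner_smul_right]
    simp
  set A₀ : L2 →ₗ[ℂ] L2 :=
    { toFun := Amap
      map_add' := hadd
      map_smul' := hsmul } with hA₀
  have hAcont : Continuous A₀ := by
    apply LinearMap.continuous_of_seq_closed_graph
    intro u x y hu hy
    have him : TendstoInMeasure volume (fun n => ((A₀ (u n) : L2) : ℝ → ℂ)) atTop
        ((y : L2) : ℝ → ℂ) :=
      tendstoInMeasure_of_tendsto_Lp (f := fun n => (A₀ (u n) : L2)) hy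
    obtain ⟨ns, hns, hae⟩ := him.exists_seq_tendsto_ae
    have hrep : ∀ᵐ s : ℝ ∂(volume : Measure ℝ),
        ∀ i : ℕ, ((A₀ (u (ns i)) : L2) : ℝ → ℂ) s = ⟪rt s, u (ns i)⟫ :=
      ae_all_iff.2 fun i => hAfn (u (ns i))
    have hyx : ((y : L2) : ℝ → ℂ) =ᵐ[volume] fun s => (⟪rt s, x⟫ : ℂ) := by
      filter_upwards [hae, hrep] with s h1 h2
      have h3 : Tendsto (fun i => (⟪rt s, u (ns i)⟫ : ℂ)) atTop (𝓝 (((y : L2) : ℝ → ℂ) s)) :=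
        Tendsto.congr (fun i => h2 i) h1
      have h4 : Tendsto (fun i => (⟪rt s, u (ns i)⟫ : ℂ)) atTop (𝓝 (⟪rt s, x⟫ : ℂ)) :=
        Tendsto.inner tendsto_const_nhds (hu.comp hns.tendsto_atTop)
      exact tendsto_nhds_unique h3 h4
    exact Lp.ext (hyx.trans (hAfn x).symm)
  set A : L2op := ⟨A₀, hAcont⟩ with hA
  have hAfn' : ∀ f : L2, ((A f : L2) : ℝ → ℂ) =ᵐ[volume] fun s => (⟪rt s, f⟫ : ℂ) :=
    fun f => hAfn f
  -- density of integrable elements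
  have hzero : ∀ B : L2op, (∀ f : L2, Integrable (f : ℝ → ℂ) volume → B f = 0) → B = 0 := by
    intro B hB
    have hd : Dense (↑(Lp.simpleFunc ℂ 2 (volume : Measure ℝ)) : Set L2) :=
      Lp.simpleFunc.dense (by norm_num)
    have heq : Set.EqOn (⇑B) (fun _ => (0 : L2))
        (↑(Lp.simpleFunc ℂ 2 (volume : Measure ℝ)) : Set L2) := by
      intro g hg
      set gs := Lp.simpleFunc.toSimpleFunc (⟨g, hg⟩ : Lp.simpleFunc ℂ 2 volume) with hgs
      have haeg : ⇑gs =ᵐ[volume] (g : ℝ → ℂ) := Lp.simpleFunc.toSimpleFunc_eq_toFun _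
      have hmem2 : MemLp (⇑gs) 2 (volume : Measure ℝ) := MemLp.ae_eq haeg.symm (Lp.memLp g)
      have hint : Integrable (⇑gs) volume :=
        (SimpleFunc.memLp_iff_integrable (by norm_num) (by norm_num)).mp hmem2
      exact hB g (hint.congr haeg)
    have hfun : (⇑B : L2 → L2) = fun _ => 0 :=
      Continuous.ext_on hd B.continuous continuous_const heq
    exact ContinuousLinearMap.ext fun f => by simpa using congrFun hfun f
  -- key identity 1 : A f - T f - lam • T (A f) = 0 for integrable f
  have hTA : ∀ f : L2, Integrable ((f : L2) : ℝ → ℂ) volume →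
      A f - T f - lam • T (A f) = 0 := by
    intro f hf
    have hd : ∀ s : ℝ, (⟪rt s, f⟫ : ℂ) - (∫ t, K s t * (f : ℝ → ℂ) t)
        - lam * (∫ x, K s x * (⟪rt x, f⟫ : ℂ)) = 0 := by
      intro s
      have hker : ∀ t : ℝ, (⟪kt s, rt' t⟫ : ℂ) = ∫ x, K s x * R x t := by
        intro t
        rw [inner_eq_intg2 (kt s) (rt' t) _ (hRK.repr_t' t)]
        refine integral_congr_ae ?_
        filter_upwards [hK.repr_t s] with x hx
        rw [hx]
        simp
      have e1 : ∫ x, K s x * (⟪rt x, f⟫ : ℂ)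
          = ∫ t, (⟪kt s, rt' t⟫ : ℂ) * (f : ℝ → ℂ) t := by
        have e1a : ∫ x, K s x * (⟪rt x, f⟫ : ℂ)
            = ∫ x, conj (((kt s : L2)) x) * ∫ t, R x t * (f : ℝ → ℂ) t := by
          refine integral_congr_ae ?_
          filter_upwards [hK.repr_t s] with x hx
          rw [hrow x f, hx]
          simp
        rw [e1a, key_swap (kt s) f hf R hRK.cont rt' hRK.repr_t' C hC]
        refine integral_congr_ae (Eventually.of_forall fun t => ?_)
        beta_reduce
        rw [inner_eq_intg2 (kt s) (rt' t) _ (hRK.repr_t' t)]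
      have hint1 : Integrable (fun t => K s t * (f : ℝ → ℂ) t) volume :=
        integrable_kernmul (kt s) f (K s) (hK.repr_t s)
      have hint2 : Integrable (fun t => (⟪kt s, rt' t⟫ : ℂ) * (f : ℝ → ℂ) t) volume := by
        refine Integrable.mono' (hf.norm.const_mul (‖kt s‖ * C)) ?_ ?_
        · exact (Continuous.inner continuous_const hRK.cont_t').aestronglyMeasurable.mul
            (Lp.aestronglyMeasurable f)
        · refine Eventually.of_forall fun t => ?_
          rw [norm_mul]
          exact mul_le_mul_of_nonneg_right ((norm_inner_le_norm _ _).trans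
            (mul_le_mul_of_nonneg_left (hC t) (norm_nonneg _))) (norm_nonneg _)
      have hptw : ∀ t : ℝ, R s t * (f : ℝ → ℂ) t
          = K s t * (f : ℝ → ℂ) t + lam * ((⟪kt s, rt' t⟫ : ℂ) * (f : ℝ → ℂ) t) := by
        intro t
        rw [hker t]
        linear_combination ((f : ℝ → ℂ) t) * (hReq1 s t)
      have hsum : (⟪rt s, f⟫ : ℂ) = (∫ t, K s t * (f : ℝ → ℂ) t)
          + lam * ∫ t, (⟪kt s, rt' t⟫ : ℂ) * (f : ℝ → ℂ) t := by
        rw [hrow s f, integral_congr_ae (Eventually.of_forall hptw),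
          integral_add hint1 (hint2.const_mul lam), integral_const_mul]
      rw [e1, hsum]
      ring
    refine Lp.ext ?_
    have e2 : ∀ s : ℝ, (∫ x, K s x * ((A f : L2) : ℝ → ℂ) x)
        = ∫ x, K s x * (⟪rt x, f⟫ : ℂ) := by
      intro s
      refine integral_congr_ae ?_
      filter_upwards [hAfn' f] with x hx
      rw [hx]
    filter_upwards [Lp.coeFn_sub (A f - T f) (lam • T (A f)), Lp.coeFn_sub (A f) (T f),
      Lp.coeFn_smul lam (T (A f)), hAfn' f, hT f, hT (A f),
      Lp.coeFn_zero ℂ 2 (volume : Measure ℝ)] with s h1 h2 h3 h4 h5 h6 h7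
    rw [h1, Pi.sub_apply, h2, Pi.sub_apply, h3, Pi.smul_apply, h4, h5, h6, h7, e2 s]
    simpa using hd s
  -- key identity 2 : A f - T f - lam • A (T f) = 0 for integrable f
  have hAT : ∀ f : L2, Integrable ((f : L2) : ℝ → ℂ) volume →
      A f - T f - lam • A (T f) = 0 := by
    intro f hf
    have hd : ∀ s : ℝ, (⟪rt s, f⟫ : ℂ) - (∫ t, K s t * (f : ℝ → ℂ) t)
        - lam * (⟪rt s, T f⟫ : ℂ) = 0 := by
      intro s
      have hker : ∀ t : ℝ, (⟪rt s, kt' t⟫ : ℂ) = ∫ x, R s x * K x t := by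
        intro t
        rw [inner_eq_intg2 (rt s) (kt' t) _ (hK.repr_t' t)]
        refine integral_congr_ae ?_
        filter_upwards [hRK.repr_t s] with x hx
        rw [hx]
        simp
      have e1 : (⟪rt s, T f⟫ : ℂ) = ∫ t, (⟪rt s, kt' t⟫ : ℂ) * (f : ℝ → ℂ) t := by
        have e1a : (⟪rt s, T f⟫ : ℂ)
            = ∫ x, conj (((rt s : L2)) x) * ((T f : L2) : ℝ → ℂ) x :=
          inner_eq_intg2 (rt s) (T f) _ (Filter.EventuallyEq.refl _ _)
        have e1b : ∫ x, conj (((rt s : L2)) x) * ((T f : L2) : ℝ → ℂ) x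
            = ∫ x, conj (((rt s : L2)) x) * ∫ t, K x t * (f : ℝ → ℂ) t := by
          refine integral_congr_ae ?_
          filter_upwards [hT f] with x hx
          rw [hx]
        rw [e1a, e1b, key_swap (rt s) f hf K hK.cont kt' hK.repr_t' C' hC']
        refine integral_congr_ae (Eventually.of_forall fun t => ?_)
        beta_reduce
        rw [inner_eq_intg2 (rt s) (kt' t) _ (hK.repr_t' t)]
      have hint1 : Integrable (fun t => K s t * (f : ℝ → ℂ) t) volume :=
        integrable_kernmul (kt s) f (K s) (hK.repr_t s)
      have hint2 : Integrable (fun t => (⟪rt s, kt' t⟫ : ℂ) * (f : ℝ → ℂ) t) volume := by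
        refine Integrable.mono' (hf.norm.const_mul (‖rt s‖ * C')) ?_ ?_
        · exact (Continuous.inner continuous_const hK.cont_t').aestronglyMeasurable.mul
            (Lp.aestronglyMeasurable f)
        · refine Eventually.of_forall fun t => ?_
          rw [norm_mul]
          exact mul_le_mul_of_nonneg_right ((norm_inner_le_norm _ _).trans
            (mul_le_mul_of_nonneg_left (hC' t) (norm_nonneg _))) (norm_nonneg _)
      have hptw : ∀ t : ℝ, R s t * (f : ℝ → ℂ) t
          = K s t * (f : ℝ → ℂ) t + lam * ((⟪rt s, kt' t⟫ : ℂ) * (f : ℝ → ℂ) t) := by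
        intro t
        rw [hker t]
        linear_combination ((f : ℝ → ℂ) t) * (hReq2 s t)
      have hsum : (⟪rt s, f⟫ : ℂ) = (∫ t, K s t * (f : ℝ → ℂ) t)
          + lam * ∫ t, (⟪rt s, kt' t⟫ : ℂ) * (f : ℝ → ℂ) t := by
        rw [hrow s f, integral_congr_ae (Eventually.of_forall hptw),
          integral_add hint1 (hint2.const_mul lam), integral_const_mul]
      rw [e1, hsum]
      ring
    refine Lp.ext ?_
    filter_upwards [Lp.coeFn_sub (A f - T f) (lam • A (T f)), Lp.coeFn_sub (A f) (T f),
      Lp.coeFn_smul lam (A (T f)), hAfn' f, hT f, hAfn' (T f),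
      Lp.coeFn_zero ℂ 2 (volume : Measure ℝ)] with s h1 h2 h3 h4 h5 h6 h7
    rw [h1, Pi.sub_apply, h2, Pi.sub_apply, h3, Pi.smul_apply, h4, h5, h6, h7]
    simpa using hd s
  -- operator identities
  have hE1 : ∀ f : L2, A f - T f - lam • T (A f) = 0 := by
    have hB : A - T - lam • (T * A) = 0 := by
      refine hzero _ fun f hf => ?_
      have := hTA f hf
      simpa [ContinuousLinearMap.sub_apply, ContinuousLinearMap.smul_apply,
        ContinuousLinearMap.mul_apply] using this
    intro f
    have := ContinuousLinearMap.ext_iff.mp hB f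
    simpa [ContinuousLinearMap.sub_apply, ContinuousLinearMap.smul_apply,
      ContinuousLinearMap.mul_apply] using this
  have hE2 : ∀ f : L2, A f - T f - lam • A (T f) = 0 := by
    have hB : A - T - lam • (A * T) = 0 := by
      refine hzero _ fun f hf => ?_
      have := hAT f hf
      simpa [ContinuousLinearMap.sub_apply, ContinuousLinearMap.smul_apply,
        ContinuousLinearMap.mul_apply] using this
    intro f
    have := ContinuousLinearMap.ext_iff.mp hB f
    simpa [ContinuousLinearMap.sub_apply, ContinuousLinearMap.smul_apply,
      ContinuousLinearMap.mul_apply] using this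
  -- assemble the unit
  have h₁ : ((1 : L2op) - lam • T) * ((1 : L2op) + lam • A) = 1 := by
    refine ContinuousLinearMap.ext fun f => ?_
    have e0 := hE1 f
    simp only [ContinuousLinearMap.mul_apply, ContinuousLinearMap.add_apply,
      ContinuousLinearMap.sub_apply, ContinuousLinearMap.smul_apply,
      ContinuousLinearMap.one_apply, map_add, _root_.map_smul]
    linear_combination (norm := module) lam • e0
  have h₂ : ((1 : L2op) + lam • A) * ((1 : L2op) - lam • T) = 1 := by
    refine ContinuousLinearMap.ext fun f => ?_
    have e0 := hE2 f
    simp only [ContinuousLinearMap.mul_apply, ContinuousLinearMap.add_apply,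
      ContinuousLinearMap.sub_apply, ContinuousLinearMap.smul_apply,
      ContinuousLinearMap.one_apply, map_sub, _root_.map_smul]
    linear_combination (norm := module) lam • e0
  exact ⟨⟨1 - lam • T, 1 + lam • A, h₁, h₂⟩, rfl⟩
end
end

section
/- Let T be a bounded linear operator on L² induced by a K⁰-kernel 𝐓 satisfying condition (iv), with subordinate operators Tₙ = PₙT and T̃ₙ = PₙTPₙ, and let {βₙ} be any sequence of complex numbers with βₙ → 0. Then ∅ ≠ ∇_s({βₙI + Tₙ}) ⊆ ∇_s({βₙI + T̃ₙ}) ⊆ Π(T). -/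
open MeasureTheory Filter Topology ContinuousLinearMap
open scoped ENNReal NNReal

noncomputable section

section AlgebraHelpers
set_option maxHeartbeats 1000000

lemma norm_one_L2op_le : ‖(1 : L2op)‖ ≤ 1 := by
  rw [ContinuousLinearMap.one_def]; exact ContinuousLinearMap.norm_id_le

lemma isUnit_and_inverse_eq {x v : L2op} (h1 : x * v = 1) (h2 : v * x = 1) :
    IsUnit x ∧ Ring.inverse x = v := by
  have hu : IsUnit x := ⟨⟨x, v, h1, h2⟩, rfl⟩
  exact ⟨hu, by rw [show x = ((⟨x, v, h1, h2⟩ : L2opˣ) : L2op) from rfl, Ring.inverse_unit]; rfl⟩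

lemma res_mul {S : L2op} {z : ℂ} (h : IsUnit (1 - z • S)) :
    (1 - z • S) * res S z = 1 := Ring.mul_inverse_cancel _ h

lemma mul_res {S : L2op} {z : ℂ} (h : IsUnit (1 - z • S)) :
    res S z * (1 - z • S) = 1 := Ring.inverse_mul_cancel _ h

lemma res_eq_one_add {S : L2op} {z : ℂ} (h : IsUnit (1 - z • S)) :
    res S z = 1 + z • fres S z := by
  have h2 := res_mul h
  rw [sub_mul, one_mul] at h2
  have h3 : (z • S) * res S z = res S z - 1 := by
    rw [eq_sub_iff_add_eq, add_comm, ← sub_eq_iff_eq_add.mp h2]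
  rw [fres, ← smul_mul_assoc, h3]
  abel

lemma fres_eq {S : L2op} {z : ℂ} (hz : z ≠ 0) (h : IsUnit (1 - z • S)) :
    fres S z = z⁻¹ • (res S z - 1) := by
  rw [res_eq_one_add h, add_sub_cancel_left, inv_smul_smul₀ hz]

lemma norm_res_le {S : L2op} {z : ℂ} (h : IsUnit (1 - z • S)) {M : ℝ}
    (hM : ‖fres S z‖ ≤ M) : ‖res S z‖ ≤ 1 + ‖z‖ * M := by
  rw [res_eq_one_add h]
  calc ‖(1 : L2op) + z • fres S z‖ ≤ ‖(1 : L2op)‖ + ‖z • fres S z‖ := norm_add_le _ _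
    _ ≤ 1 + ‖z‖ * M :=
        add_le_add norm_one_L2op_le
          (by rw [norm_smul z (fres S z)]; exact mul_le_mul_of_nonneg_left hM (norm_nonneg z))

lemma tendsto_apply_comp {A : ℕ → L2op} {w : L2} {u : ℕ → L2} {v : L2} {C : ℝ}
    (hC : ∀ᶠ n in atTop, ‖A n‖ ≤ C)
    (hA : Tendsto (fun n => A n v) atTop (𝓝 w))
    (hu : Tendsto u atTop (𝓝 v)) :
    Tendsto (fun n => A n (u n)) atTop (𝓝 w) := by
  have key : Tendsto (fun n => A n (u n) - w) atTop (𝓝 0) := by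
    apply squeeze_zero_norm' (a := fun n => C * ‖u n - v‖ + ‖A n v - w‖)
    · filter_upwards [hC] with n hn
      calc ‖A n (u n) - w‖ = ‖A n (u n - v) + (A n v - w)‖ := by
            congr 1; rw [map_sub]; abel
        _ ≤ ‖A n (u n - v)‖ + ‖A n v - w‖ := norm_add_le _ _
        _ ≤ C * ‖u n - v‖ + ‖A n v - w‖ := by
            exact add_le_add (le_trans ((A n).le_opNorm _)
              (mul_le_mul_of_nonneg_right hn (norm_nonneg _))) le_rfl
    · have h1 : Tendsto (fun n => ‖u n - v‖) atTop (𝓝 0) := by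
        simpa using (tendsto_iff_norm_sub_tendsto_zero.mp hu)
      have h2 : Tendsto (fun n => ‖A n v - w‖) atTop (𝓝 0) := by
        simpa using (tendsto_iff_norm_sub_tendsto_zero.mp hA)
      simpa using (h1.const_mul C).add h2
  simpa using key.add_const w

lemma unit_swap {R : Type*} [Ring R] {x y u : R} (h1 : (1 - y*x) * u = 1)
    (h2 : u * (1 - y*x) = 1) :
    (1 - x*y) * (1 + x*u*y) = 1 ∧ (1 + x*u*y) * (1 - x*y) = 1 := by
  constructor
  · calc (1 - x*y) * (1 + x*u*y) = 1 + x*((1 - y*x)*u)*y - x*y := by noncomm_ring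
      _ = 1 := by rw [h1]; noncomm_ring
  · calc (1 + x*u*y) * (1 - x*y) = 1 + x*(u*(1 - y*x))*y - x*y := by noncomm_ring
      _ = 1 := by rw [h2]; noncomm_ring

lemma norm_inverse_le {x u : L2op} (hx : ‖x‖ ≤ 1/2) (h1 : u * (1 - x) = 1) :
    ‖u‖ ≤ 2 := by
  have h1' : u - u * x = 1 := by rw [mul_sub, mul_one] at h1; exact h1
  have h2 : u = 1 + u * x := by
    exact eq_add_of_sub_eq h1'
  have h3 : ‖u‖ ≤ 1 + ‖u‖ * (1/2) := by
    calc ‖u‖ = ‖(1 : L2op) + u * x‖ := by rw [← h2]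
      _ ≤ ‖(1 : L2op)‖ + ‖u * x‖ := norm_add_le _ _
      _ ≤ 1 + ‖u‖ * (1/2) := add_le_add norm_one_L2op_le
          (le_trans (norm_mul_le _ _) (mul_le_mul_of_nonneg_left hx (norm_nonneg _)))
  linarith
section Pfacts

lemma chi_mem_01 (t x : ℝ) : chi t x = 0 ∨ chi t x = 1 := by
  unfold chi; by_cases h : x ∈ Set.Ioo (-t) t <;> simp [h]

lemma norm_chi_le (t x : ℝ) : ‖chi t x‖ ≤ 1 := by
  rcases chi_mem_01 t x with h | h <;> simp [h]

lemma chi_mul_self (t x : ℝ) : chi t x * chi t x = chi t x := by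
  rcases chi_mem_01 t x with h | h <;> simp [h]

lemma chi_eq_one {t x : ℝ} (h : |x| < t) : chi t x = 1 := by
  unfold chi
  rw [Set.indicator_of_mem _ _]
  · rfl
  · constructor
    · linarith [neg_abs_le x]
    · linarith [le_abs_self x]

lemma norm_P_apply_le {Pn : L2op} {t : ℝ}
    (hproj : ∀ f : L2, (Pn f : ℝ → ℂ) =ᵐ[volume] fun x => chi t x * (f : ℝ → ℂ) x)
    (f : L2) : ‖Pn f‖ ≤ ‖f‖ := by
  rw [Lp.norm_def, Lp.norm_def]
  apply ENNReal.toReal_mono (Lp.eLpNorm_ne_top f)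
  calc eLpNorm (Pn f : ℝ → ℂ) 2 volume
      = eLpNorm (fun x => chi t x * (f : ℝ → ℂ) x) 2 volume := eLpNorm_congr_ae (hproj f)
    _ ≤ eLpNorm (f : ℝ → ℂ) 2 volume := by
        apply eLpNorm_mono_ae (Eventually.of_forall fun x => ?_)
        calc ‖chi t x * (f : ℝ → ℂ) x‖ = ‖chi t x‖ * ‖(f : ℝ → ℂ) x‖ := norm_mul _ _
          _ ≤ 1 * ‖(f : ℝ → ℂ) x‖ := by
              exact mul_le_mul_of_nonneg_right (norm_chi_le t x) (norm_nonneg _)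
          _ = ‖(f : ℝ → ℂ) x‖ := one_mul _

lemma nnnorm_chi_sub_one_le (t x : ℝ) : ‖chi t x - 1‖₊ ≤ 1 := by
  rcases chi_mem_01 t x with h | h <;> simp [h]

lemma P_idem {Pn : L2op} {t : ℝ}
    (hproj : ∀ f : L2, (Pn f : ℝ → ℂ) =ᵐ[volume] fun x => chi t x * (f : ℝ → ℂ) x) :
    Pn * Pn = Pn := by
  ext f
  rw [ContinuousLinearMap.mul_apply]
  filter_upwards [hproj (Pn f), hproj f] with x h1 h2
  calc (Pn (Pn f) : ℝ → ℂ) x = chi t x * (Pn f : ℝ → ℂ) x := h1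
    _ = chi t x * (chi t x * (f : ℝ → ℂ) x) := by rw [h2]
    _ = (chi t x * chi t x) * (f : ℝ → ℂ) x := by ring
    _ = chi t x * (f : ℝ → ℂ) x := by rw [chi_mul_self]
    _ = (Pn f : ℝ → ℂ) x := h2.symm

lemma P_tendsto {P : ℕ → L2op} {tau : ℕ → ℝ}
    (htau : Tendsto tau atTop atTop)
    (hproj : ∀ n, ∀ f : L2, (P n f : ℝ → ℂ) =ᵐ[volume]
      fun x => chi (tau n) x * (f : ℝ → ℂ) x)
    (f : L2) : Tendsto (fun n => P n f) atTop (𝓝 f) := by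
  rw [tendsto_iff_norm_sub_tendsto_zero]
  have hnorm : ∀ n, ‖P n f - f‖
      = (eLpNorm (fun x => (chi (tau n) x - 1) * (f : ℝ → ℂ) x) 2 volume).toReal := by
    intro n
    rw [Lp.norm_def]
    congr 1
    apply eLpNorm_congr_ae
    filter_upwards [Lp.coeFn_sub (P n f) f, hproj n f] with x h1 h2
    rw [h1, Pi.sub_apply, h2]; ring
  simp only [hnorm]
  have key : Tendsto
      (fun n => ∫⁻ x, ((‖(chi (tau n) x - 1) * (f : ℝ → ℂ) x‖₊ : ℝ≥0∞)) ^ (2:ℝ) ∂volume)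
      atTop (𝓝 0) := by
    have h0 : (0 : ℝ≥0∞) = ∫⁻ (x : ℝ), 0 ∂volume := by simp
    rw [h0]
    apply tendsto_lintegral_of_dominated_convergence'
      (bound := fun x => (‖(f : ℝ → ℂ) x‖₊ : ℝ≥0∞) ^ (2:ℝ))
    · intro n
      have hm : AEMeasurable (fun x => (chi (tau n) x - 1) * (f : ℝ → ℂ) x) volume := by
        have hchi : Measurable (fun x => chi (tau n) x - 1) :=
          ((measurable_const.indicator measurableSet_Ioo)).sub measurable_const
        exact (hchi.aemeasurable).mul (Lp.aestronglyMeasurable f).aemeasurable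
      exact hm.enorm.pow_const _
    · intro n
      apply Eventually.of_forall
      intro x
      apply ENNReal.rpow_le_rpow _ (by norm_num)
      rw [nnnorm_mul, ENNReal.coe_mul]
      calc (‖chi (tau n) x - 1‖₊ : ℝ≥0∞) * (‖(f : ℝ → ℂ) x‖₊ : ℝ≥0∞)
          ≤ 1 * (‖(f : ℝ → ℂ) x‖₊ : ℝ≥0∞) := by
            apply mul_le_mul_left
            exact_mod_cast nnnorm_chi_sub_one_le (tau n) x
        _ = _ := one_mul _
    · have hfin := (eLpNorm_lt_top_iff_lintegral_rpow_enorm_lt_top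
        (f := ((f : L2) : ℝ → ℂ)) (μ := volume) (p := 2) two_ne_zero
        ENNReal.ofNat_ne_top).mp (Lp.eLpNorm_lt_top f)
      simp only [ENNReal.toReal_ofNat] at hfin
      exact hfin.ne
    · apply Eventually.of_forall
      intro a
      apply Tendsto.congr' _ tendsto_const_nhds
      have : ∀ᶠ n in atTop, |a| < tau n := by
        filter_upwards [htau.eventually_gt_atTop |a|] with n hn using hn
      filter_upwards [this] with n hn
      rw [chi_eq_one hn]
      simp [ENNReal.zero_rpow_of_pos]
  have key2 : Tendsto
      (fun n => eLpNorm (fun x => (chi (tau n) x - 1) * (f : ℝ → ℂ) x) 2 volume)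
      atTop (𝓝 0) := by
    have heq : ∀ n, eLpNorm (fun x => (chi (tau n) x - 1) * (f : ℝ → ℂ) x) 2 volume
        = (∫⁻ x, ((‖(chi (tau n) x - 1) * (f : ℝ → ℂ) x‖₊ : ℝ≥0∞)) ^ (2:ℝ) ∂volume)
          ^ (1/2 : ℝ) := by
      intro n
      rw [eLpNorm_eq_lintegral_rpow_enorm_toReal two_ne_zero ENNReal.ofNat_ne_top]
      simp
      rfl
    simp only [heq]
    have hc := (ENNReal.continuous_rpow_const (y := (1/2 : ℝ))).tendsto 0
    have h00 : (0 : ℝ≥0∞) ^ (1/2 : ℝ) = 0 := by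
      apply ENNReal.zero_rpow_of_pos; norm_num
    rw [h00] at hc
    exact hc.comp key
  have := (ENNReal.tendsto_toReal (a := 0) (by simp)).comp key2
  simpa [Function.comp_def] using this
section MainParts

lemma smul_mul_smul_op (c d : ℂ) (X Y : L2op) : (c • X) * (d • Y) = (c * d) • (X * Y) := by
  rw [smul_mul_assoc, mul_smul_comm, smul_smul]

lemma resolvent_sub (T Pn : L2op) (β ζ : ℂ) (hidem : Pn * Pn = Pn)
    (hu : IsUnit (1 - ζ • (β • (1:L2op) + Pn * T))) (ha : 1 - ζ * β ≠ 0) :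
    IsUnit (1 - ζ • (β • (1:L2op) + Pn * T * Pn)) ∧
    res (β • (1:L2op) + Pn * T * Pn) ζ
      = (1 - ζ * β)⁻¹ • (1 + ζ • (Pn * T * res (β • (1:L2op) + Pn * T) ζ * Pn)) := by
  set A := Pn * T with hA
  set a := 1 - ζ * β with haa
  set R := res (β • (1:L2op) + A) ζ with hR
  set w := ζ * a⁻¹ with hw
  have hwa : w * a = ζ := by rw [hw, mul_assoc, inv_mul_cancel₀ ha, mul_one]
  have hPA : Pn * A = A := by rw [hA, ← mul_assoc, hidem]
  have hfact : ∀ B : L2op, (1:L2op) - ζ • (β • 1 + B) = a • ((1:L2op) - w • B) := by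
    intro B
    rw [smul_sub, smul_smul, mul_comm a w, hwa, smul_add, smul_smul, haa, sub_smul,
      one_smul]
    abel
  have key1 : ((1:L2op) - w • A) * (a • R) = 1 := by
    have h1 := res_mul hu
    rw [hfact A] at h1
    calc ((1:L2op) - w • A) * (a • R) = a • (((1:L2op) - w • A) * R) := by
          rw [mul_smul_comm]
      _ = (a • ((1:L2op) - w • A)) * R := by rw [smul_mul_assoc]
      _ = 1 := h1
  have key2 : (a • R) * ((1:L2op) - w • A) = 1 := by
    have h2 := mul_res hu
    rw [hfact A] at h2
    calc (a • R) * ((1:L2op) - w • A) = a • (R * ((1:L2op) - w • A)) := by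
          rw [smul_mul_assoc]
      _ = R * (a • ((1:L2op) - w • A)) := by rw [mul_smul_comm]
      _ = 1 := h2
  have hyx : Pn * (w • A) = w • A := by rw [mul_smul_comm, hPA]
  have hswap := unit_swap (x := w • A) (y := Pn) (u := a • R)
    (by rw [hyx]; exact key1) (by rw [hyx]; exact key2)
  have hxy : (w • A) * Pn = w • (A * Pn) := by rw [smul_mul_assoc]
  have hxuy : (w • A) * (a • R) * Pn = ζ • (A * R * Pn) := by
    calc (w • A) * (a • R) * Pn = ((w * a) • (A * R)) * Pn := by
          rw [smul_mul_smul_op]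
      _ = ζ • (A * R * Pn) := by rw [hwa, smul_mul_assoc]
  rw [hxy, hxuy] at hswap
  have hAPn : Pn * T * Pn = A * Pn := by rw [hA]
  have hgoal1 : ((1:L2op) - ζ • (β • 1 + A * Pn)) * (a⁻¹ • (1 + ζ • (A * R * Pn))) = 1 := by
    calc ((1:L2op) - ζ • (β • 1 + A * Pn)) * (a⁻¹ • (1 + ζ • (A * R * Pn)))
        = (a • ((1:L2op) - w • (A * Pn))) * (a⁻¹ • (1 + ζ • (A * R * Pn))) := by
          rw [hfact (A * Pn)]
      _ = (a * a⁻¹) • (((1:L2op) - w • (A * Pn)) * (1 + ζ • (A * R * Pn))) :=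
          smul_mul_smul_op _ _ _ _
      _ = 1 := by rw [mul_inv_cancel₀ ha, one_smul, hswap.1]
  have hgoal2 : (a⁻¹ • (1 + ζ • (A * R * Pn))) * ((1:L2op) - ζ • (β • 1 + A * Pn)) = 1 := by
    calc (a⁻¹ • (1 + ζ • (A * R * Pn))) * ((1:L2op) - ζ • (β • 1 + A * Pn))
        = (a⁻¹ • (1 + ζ • (A * R * Pn))) * (a • ((1:L2op) - w • (A * Pn))) := by
          rw [hfact (A * Pn)]
      _ = (a⁻¹ * a) • ((1 + ζ • (A * R * Pn)) * ((1:L2op) - w • (A * Pn))) :=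
          smul_mul_smul_op _ _ _ _
      _ = 1 := by rw [inv_mul_cancel₀ ha, one_smul, hswap.2]
  rw [hAPn]
  obtain ⟨hu', hinv⟩ := isUnit_and_inverse_eq hgoal1 hgoal2
  exact ⟨hu', by rw [res, hinv, haa]⟩
lemma norm_b_small {ζ bn : ℂ} (hbn : ‖bn‖ < (2 * (‖ζ‖ + 1))⁻¹) : ‖ζ * bn‖ ≤ 1/2 := by
  have hc : (0:ℝ) ≤ ‖ζ‖ := norm_nonneg ζ
  have hpos : (0:ℝ) < 2 * (‖ζ‖ + 1) := by positivity
  have h1 : ‖ζ‖ * (2 * (‖ζ‖ + 1))⁻¹ ≤ 1/2 := by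
    rw [mul_inv_le_iff₀ hpos]
    linarith
  calc ‖ζ * bn‖ = ‖ζ‖ * ‖bn‖ := norm_mul _ _
    _ ≤ ‖ζ‖ * (2 * (‖ζ‖ + 1))⁻¹ := mul_le_mul_of_nonneg_left hbn.le hc
    _ ≤ 1/2 := h1

lemma one_sub_ne {ζ bn : ℂ} (hbn : ‖ζ * bn‖ ≤ 1/2) : 1 - ζ * bn ≠ 0 := by
  intro h
  have h2 : (1:ℂ) = ζ * bn := by
    have := sub_eq_zero.mp h; exact this
  rw [← h2] at hbn
  simp at hbn
  linarith

lemma norm_one_sub_inv_le {ζ bn : ℂ} (hbn : ‖ζ * bn‖ ≤ 1/2) : ‖(1 - ζ * bn)⁻¹‖ ≤ 2 := by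
  have h1 : (1/2 : ℝ) ≤ ‖1 - ζ * bn‖ := by
    have := norm_sub_norm_le (1:ℂ) (ζ * bn)
    simp only [norm_one] at this
    linarith
  rw [norm_inv]
  calc ‖1 - ζ * bn‖⁻¹ ≤ (1/2 : ℝ)⁻¹ := by
        apply inv_anti₀ (by norm_num) h1
    _ = 2 := by norm_num

lemma part2 (T : L2op) (P : ℕ → L2op) (b : ℕ → ℂ)
    (hidem : ∀ n, P n * P n = P n)
    (hPop : ∀ n, ‖P n‖ ≤ 1)
    (hPt : ∀ f : L2, Tendsto (fun n => P n f) atTop (𝓝 f))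
    (hb : Tendsto b atTop (𝓝 (0:ℂ))) :
    nablaS (fun n => b n • (1 : L2op) + P n * T)
      ⊆ nablaS (fun n => b n • (1 : L2op) + P n * T * P n) := by
  intro ζ hζ
  obtain ⟨⟨hζ0, M, hMpos, N, hreg⟩, hconv⟩ := hζ
  have hM0 : (0:ℝ) ≤ M := hMpos.le
  have hbnorm : Tendsto (fun n => ‖b n‖) atTop (𝓝 0) := by
    simpa using hb.norm
  have hsm : ∀ᶠ n in atTop, ‖b n‖ < (2 * (‖ζ‖ + 1))⁻¹ :=
    (NormedAddCommGroup.tendsto_nhds_zero.mp hb) _ (by positivity)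
  obtain ⟨N₁, hN₁⟩ := eventually_atTop.mp (hsm.and (eventually_gt_atTop N))
  set N₂ := max N₁ N with hN₂def
  -- facts for n > N₂
  have hfacts : ∀ n, n > N₂ →
      IsUnit (1 - ζ • (b n • (1:L2op) + P n * T)) ∧ ‖ζ * b n‖ ≤ 1/2 := by
    intro n hn
    have h1 := hN₁ n (le_of_lt (lt_of_le_of_lt (le_max_left _ _) hn))
    refine ⟨(hreg n (lt_of_le_of_lt (le_max_right _ _) hn)).1, norm_b_small h1.1⟩
  -- resolvent formula for each good n
  have hform : ∀ n, n > N₂ →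
      IsUnit (1 - ζ • (b n • (1:L2op) + P n * T * P n)) ∧
      res (b n • (1:L2op) + P n * T * P n) ζ
        = (1 - ζ * b n)⁻¹ •
          (1 + ζ • (P n * T * res (b n • (1:L2op) + P n * T) ζ * P n)) := by
    intro n hn
    exact resolvent_sub T (P n) (b n) ζ (hidem n) (hfacts n hn).1
      (one_sub_ne (hfacts n hn).2)
  -- operator identity A*R = fres - b•res (no invertibility needed)
  have hAR : ∀ n, (P n * T) * res (b n • (1:L2op) + P n * T) ζ
      = fres (b n • (1:L2op) + P n * T) ζ - b n • res (b n • (1:L2op) + P n * T) ζ := by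
    intro n
    rw [fres, add_mul, smul_mul_assoc, one_mul]
    abel
  -- norm bound on A*R*P for good n
  set B := M + (1 + ‖ζ‖ * M) with hBdef
  have hB0 : (0:ℝ) ≤ B := by
    have : (0:ℝ) ≤ ‖ζ‖ * M := mul_nonneg (norm_nonneg _) hM0
    simp only [hBdef]; linarith
  have hARP : ∀ n, n > N₂ →
      ‖P n * T * res (b n • (1:L2op) + P n * T) ζ * P n‖ ≤ B := by
    intro n hn
    have hn' : n > N := lt_of_le_of_lt (le_max_right _ _) hn
    have hfn : ‖fres (b n • (1:L2op) + P n * T) ζ‖ ≤ M := (hreg n hn').2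
    have hRn : ‖res (b n • (1:L2op) + P n * T) ζ‖ ≤ 1 + ‖ζ‖ * M :=
      norm_res_le (hreg n hn').1 hfn
    have hb1 : ‖b n‖ ≤ 1 := by
      have h1 := (hN₁ n (le_of_lt (lt_of_le_of_lt (le_max_left _ _) hn))).1
      have hpos : (0:ℝ) < 2 * (‖ζ‖ + 1) := by positivity
      have h2 : (2 * (‖ζ‖ + 1))⁻¹ ≤ 1 := by
        rw [inv_le_one_iff₀]; right; linarith [norm_nonneg ζ]
      linarith
    have hARn : ‖(P n * T) * res (b n • (1:L2op) + P n * T) ζ‖ ≤ B := by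
      rw [hAR n]
      calc ‖fres (b n • (1:L2op) + P n * T) ζ - b n • res (b n • (1:L2op) + P n * T) ζ‖
          ≤ ‖fres (b n • (1:L2op) + P n * T) ζ‖
            + ‖b n • res (b n • (1:L2op) + P n * T) ζ‖ := norm_sub_le _ _
        _ ≤ M + 1 * (1 + ‖ζ‖ * M) := by
            apply add_le_add hfn
            rw [norm_smul (b n) (res (b n • (1:L2op) + P n * T) ζ)]
            apply mul_le_mul hb1 hRn (norm_nonneg _) (by norm_num)
        _ = B := by rw [hBdef]; ring
    calc ‖P n * T * res (b n • (1:L2op) + P n * T) ζ * P n‖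
        ≤ ‖P n * T * res (b n • (1:L2op) + P n * T) ζ‖ * ‖P n‖ := norm_mul_le _ _
      _ ≤ B * 1 := mul_le_mul hARn (hPop n) (norm_nonneg _) hB0
      _ = B := mul_one B
  -- norm bound on fres of the primed sequence
  set M' := ‖ζ‖⁻¹ * (2 * (1 + ‖ζ‖ * B) + 1) + 1 with hM'def
  have hM'pos : (0:ℝ) < M' := by
    have h1 : (0:ℝ) ≤ ‖ζ‖ * B := mul_nonneg (norm_nonneg _) hB0
    have h2 : (0:ℝ) ≤ ‖ζ‖⁻¹ := inv_nonneg.mpr (norm_nonneg _)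
    have h3 : (0:ℝ) ≤ ‖ζ‖⁻¹ * (2 * (1 + ‖ζ‖ * B) + 1) := by
      apply mul_nonneg h2; linarith
    simp only [hM'def]; linarith
  have hfbound : ∀ n, n > N₂ →
      ‖fres (b n • (1:L2op) + P n * T * P n) ζ‖ ≤ M' := by
    intro n hn
    have hobt := hform n hn
    have hinv2 : ‖(1 - ζ * b n)⁻¹‖ ≤ 2 := norm_one_sub_inv_le (hfacts n hn).2
    have hres' : ‖res (b n • (1:L2op) + P n * T * P n) ζ‖ ≤ 2 * (1 + ‖ζ‖ * B) := by
      rw [hobt.2, norm_smul ((1 - ζ * b n)⁻¹)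
        ((1:L2op) + ζ • (P n * T * res (b n • (1:L2op) + P n * T) ζ * P n))]
      apply mul_le_mul hinv2 _ (norm_nonneg _) (by norm_num)
      calc ‖(1:L2op) + ζ • (P n * T * res (b n • (1:L2op) + P n * T) ζ * P n)‖
          ≤ ‖(1:L2op)‖ + ‖ζ • (P n * T * res (b n • (1:L2op) + P n * T) ζ * P n)‖ :=
            norm_add_le _ _
        _ ≤ 1 + ‖ζ‖ * B := by
            apply add_le_add norm_one_L2op_le
            rw [norm_smul ζ (P n * T * res (b n • (1:L2op) + P n * T) ζ * P n)]
            exact mul_le_mul_of_nonneg_left (hARP n hn) (norm_nonneg _)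
    rw [fres_eq hζ0 hobt.1,
      norm_smul (ζ⁻¹) (res (b n • (1:L2op) + P n * T * P n) ζ - 1), norm_inv]
    calc ‖ζ‖⁻¹ * ‖res (b n • (1:L2op) + P n * T * P n) ζ - 1‖
        ≤ ‖ζ‖⁻¹ * (2 * (1 + ‖ζ‖ * B) + 1) := by
          apply mul_le_mul_of_nonneg_left _ (inv_nonneg.mpr (norm_nonneg _))
          calc ‖res (b n • (1:L2op) + P n * T * P n) ζ - 1‖
              ≤ ‖res (b n • (1:L2op) + P n * T * P n) ζ‖ + ‖(1:L2op)‖ := norm_sub_le _ _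
            _ ≤ 2 * (1 + ‖ζ‖ * B) + 1 := add_le_add hres' norm_one_L2op_le
      _ ≤ M' := by simp only [hM'def]; linarith
  refine ⟨⟨hζ0, M', hM'pos, N₂, fun n hn => ⟨(hform n hn).1, hfbound n hn⟩⟩, ?_⟩
  -- strong convergence
  intro f
  obtain ⟨g, hg⟩ := hconv f
  refine ⟨g, ?_⟩
  -- t1 : fres Sₙ ζ (Pₙ f) → g
  have hMbound : ∀ᶠ n in atTop, ‖fres (b n • (1:L2op) + P n * T) ζ‖ ≤ M := by
    filter_upwards [eventually_gt_atTop N] with n hn using (hreg n hn).2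
  have t1 : Tendsto (fun n => fres (b n • (1:L2op) + P n * T) ζ (P n f)) atTop (𝓝 g) :=
    tendsto_apply_comp hMbound hg (hPt f)
  -- t2 : bₙ • res Sₙ ζ (Pₙ f) → 0
  have t2 : Tendsto (fun n => b n • res (b n • (1:L2op) + P n * T) ζ (P n f))
      atTop (𝓝 0) := by
    apply squeeze_zero_norm' (a := fun n => ‖b n‖ * ((1 + ‖ζ‖ * M) * ‖f‖))
    · filter_upwards [eventually_gt_atTop N] with n hn
      have hRn : ‖res (b n • (1:L2op) + P n * T) ζ‖ ≤ 1 + ‖ζ‖ * M :=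
        norm_res_le (hreg n hn).1 (hreg n hn).2
      have hPf : ‖P n f‖ ≤ ‖f‖ := by
        calc ‖P n f‖ ≤ ‖P n‖ * ‖f‖ := (P n).le_opNorm f
          _ ≤ 1 * ‖f‖ := mul_le_mul_of_nonneg_right (hPop n) (norm_nonneg _)
          _ = ‖f‖ := one_mul _
      rw [norm_smul (b n) (res (b n • (1:L2op) + P n * T) ζ (P n f))]
      apply mul_le_mul_of_nonneg_left _ (norm_nonneg _)
      calc ‖res (b n • (1:L2op) + P n * T) ζ (P n f)‖
          ≤ ‖res (b n • (1:L2op) + P n * T) ζ‖ * ‖P n f‖ := le_opNorm _ _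
        _ ≤ (1 + ‖ζ‖ * M) * ‖f‖ := by
            apply mul_le_mul hRn hPf (norm_nonneg _)
            have : (0:ℝ) ≤ ‖ζ‖ * M := mul_nonneg (norm_nonneg _) hM0
            linarith
    · simpa using hbnorm.mul_const ((1 + ‖ζ‖ * M) * ‖f‖)
  -- t3 : (A*R*Pₙ) f → g
  have hARapp : ∀ n, (P n * T * res (b n • (1:L2op) + P n * T) ζ * P n) f
      = fres (b n • (1:L2op) + P n * T) ζ (P n f)
        - b n • res (b n • (1:L2op) + P n * T) ζ (P n f) := by
    intro n
    rw [ContinuousLinearMap.mul_apply, hAR n, ContinuousLinearMap.sub_apply,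
      ContinuousLinearMap.smul_apply]
  have t3 : Tendsto (fun n => (P n * T * res (b n • (1:L2op) + P n * T) ζ * P n) f)
      atTop (𝓝 g) := by
    have := t1.sub t2
    rw [sub_zero] at this
    exact Tendsto.congr (fun n => (hARapp n).symm) this
  -- t4 : aₙ⁻¹ → 1
  have t4 : Tendsto (fun n => (1 - ζ * b n)⁻¹) atTop (𝓝 1) := by
    have h1 : Tendsto (fun n => 1 - ζ * b n) atTop (𝓝 1) := by
      have := tendsto_const_nhds (x := (1:ℂ)) (f := atTop (α := ℕ))
      have h2 := hb.const_mul ζ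
      rw [mul_zero] at h2
      simpa using this.sub h2
    have := h1.inv₀ one_ne_zero
    simpa using this
  -- t5 : res S'ₙ ζ f → f + ζ • g
  have t5 : Tendsto (fun n => res (b n • (1:L2op) + P n * T * P n) ζ f)
      atTop (𝓝 (f + ζ • g)) := by
    have haux : Tendsto (fun n => (1 - ζ * b n)⁻¹ •
        (f + ζ • ((P n * T * res (b n • (1:L2op) + P n * T) ζ * P n) f)))
        atTop (𝓝 ((1:ℂ) • (f + ζ • g))) :=
      Tendsto.smul t4 (tendsto_const_nhds.add (t3.const_smul ζ))
    rw [one_smul] at haux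
    apply Tendsto.congr' _ haux
    filter_upwards [eventually_gt_atTop N₂] with n hn
    rw [(hform n hn).2]
    rw [ContinuousLinearMap.smul_apply, ContinuousLinearMap.add_apply,
      ContinuousLinearMap.one_apply, ContinuousLinearMap.smul_apply]
  -- conclusion
  have t6 : Tendsto (fun n => ζ⁻¹ • (res (b n • (1:L2op) + P n * T * P n) ζ f - f))
      atTop (𝓝 g) := by
    have := (t5.sub (tendsto_const_nhds (x := f))).const_smul (ζ⁻¹)
    have heq : ζ⁻¹ • (f + ζ • g - f) = g := by
      rw [add_sub_cancel_left, smul_smul, inv_mul_cancel₀ hζ0, one_smul]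
    rw [heq] at this
    exact this
  apply Tendsto.congr' _ t6
  filter_upwards [eventually_gt_atTop N₂] with n hn
  rw [fres_eq hζ0 (hform n hn).1]
  rw [ContinuousLinearMap.smul_apply, ContinuousLinearMap.sub_apply,
    ContinuousLinearMap.one_apply]
lemma part3 (T : L2op) (P : ℕ → L2op) (b : ℕ → ℂ)
    (hPop : ∀ n, ‖P n‖ ≤ 1)
    (hPt : ∀ f : L2, Tendsto (fun n => P n f) atTop (𝓝 f))
    (hb : Tendsto b atTop (𝓝 (0:ℂ))) :
    nablaS (fun n => b n • (1 : L2op) + P n * T * P n) ⊆ regularSet T := by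
  intro ζ hζ
  obtain ⟨⟨hζ0, M, hMpos, N, hreg⟩, hconv⟩ := hζ
  have hbnorm : Tendsto (fun n => ‖b n‖) atTop (𝓝 0) := by simpa using hb.norm
  -- strong convergence of S'ₙ to T
  have hS't : ∀ v : L2, Tendsto (fun n => (b n • (1:L2op) + P n * T * P n) v)
      atTop (𝓝 (T v)) := by
    intro v
    have h1 : Tendsto (fun n => b n • v) atTop (𝓝 0) := by
      apply squeeze_zero_norm' (a := fun n => ‖b n‖ * ‖v‖)
      · exact Eventually.of_forall fun n => (norm_smul (b n) v).le
      · simpa using hbnorm.mul_const ‖v‖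
    have h2 : Tendsto (fun n => P n (T (P n v))) atTop (𝓝 (T v)) := by
      apply tendsto_apply_comp (C := 1)
        (Eventually.of_forall fun n => hPop n) (hPt (T v))
      exact (T.continuous.tendsto v).comp (hPt v)
    have h3 := h1.add h2
    rw [zero_add] at h3
    apply Tendsto.congr _ h3
    intro n
    simp [ContinuousLinearMap.add_apply, ContinuousLinearMap.smul_apply,
      ContinuousLinearMap.mul_apply]
  -- uniform bound on S'ₙ eventually
  have hS'b : ∀ᶠ n in atTop, ‖b n • (1:L2op) + P n * T * P n‖ ≤ ‖T‖ + 1 := by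
    have hev : ∀ᶠ n in atTop, ‖b n‖ ≤ 1 :=
      (NormedAddCommGroup.tendsto_nhds_zero.mp hb) 1 one_pos |>.mono fun n h => h.le
    filter_upwards [hev] with n h1
    calc ‖b n • (1:L2op) + P n * T * P n‖
        ≤ ‖b n • (1:L2op)‖ + ‖P n * T * P n‖ := norm_add_le _ _
      _ ≤ 1 + ‖T‖ := by
          apply add_le_add
          · rw [norm_smul (b n) (1:L2op)]
            calc ‖b n‖ * ‖(1:L2op)‖ ≤ 1 * 1 :=
                mul_le_mul h1 norm_one_L2op_le (norm_nonneg _) zero_le_one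
              _ = 1 := one_mul 1
          · calc ‖P n * T * P n‖ ≤ ‖P n * T‖ * ‖P n‖ := norm_mul_le _ _
              _ ≤ ‖P n‖ * ‖T‖ * ‖P n‖ :=
                  mul_le_mul_of_nonneg_right (norm_mul_le _ _) (norm_nonneg _)
              _ ≤ 1 * ‖T‖ * 1 := by
                  apply mul_le_mul _ (hPop n) (norm_nonneg _)
                    (mul_nonneg zero_le_one (norm_nonneg _))
                  exact mul_le_mul_of_nonneg_right (hPop n) (norm_nonneg _)
              _ = ‖T‖ := by ring
      _ = ‖T‖ + 1 := by ring
  -- the limit of the fredholm resolvents as a function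
  have hgf : ∀ f : L2, ∃ g : L2,
      Tendsto (fun n => fres (b n • (1:L2op) + P n * T * P n) ζ f) atTop (𝓝 g) := hconv
  classical
  set gf : L2 → L2 := fun f => Classical.choose (hgf f) with hgfdef
  have hgl : ∀ f, Tendsto (fun n => fres (b n • (1:L2op) + P n * T * P n) ζ f)
      atTop (𝓝 (gf f)) := fun f => Classical.choose_spec (hgf f)
  -- linearity of gf
  have hadd : ∀ f₁ f₂, gf (f₁ + f₂) = gf f₁ + gf f₂ := by
    intro f₁ f₂
    apply tendsto_nhds_unique (hgl (f₁ + f₂))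
    have := (hgl f₁).add (hgl f₂)
    apply Tendsto.congr _ this
    intro n
    rw [map_add]
  have hsmul : ∀ (c : ℂ) f, gf (c • f) = c • gf f := by
    intro c f
    apply tendsto_nhds_unique (hgl (c • f))
    have := (hgl f).const_smul c
    apply Tendsto.congr _ this
    intro n
    rw [_root_.map_smul]
  -- norm bound of gf
  have hgnorm : ∀ f, ‖gf f‖ ≤ M * ‖f‖ := by
    intro f
    apply le_of_tendsto (hgl f).norm
    filter_upwards [eventually_gt_atTop N] with n hn
    calc ‖fres (b n • (1:L2op) + P n * T * P n) ζ f‖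
        ≤ ‖fres (b n • (1:L2op) + P n * T * P n) ζ‖ * ‖f‖ := le_opNorm _ _
      _ ≤ M * ‖f‖ := mul_le_mul_of_nonneg_right (hreg n hn).2 (norm_nonneg _)
  -- build the continuous linear operator G
  set G : L2 →ₗ[ℂ] L2 :=
    { toFun := gf, map_add' := hadd, map_smul' := hsmul } with hGdef
  set Gc : L2op := G.mkContinuous M hgnorm with hGcdef
  have hGc : ∀ f, Gc f = gf f := fun f => rfl
  set R : L2op := 1 + ζ • Gc with hRdef
  have hRf : ∀ f, R f = f + ζ • gf f := by
    intro f
    rw [hRdef, ContinuousLinearMap.add_apply, ContinuousLinearMap.one_apply,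
      ContinuousLinearMap.smul_apply, hGc]
  -- res S'ₙ f → R f
  have hRconv : ∀ f, Tendsto (fun n => res (b n • (1:L2op) + P n * T * P n) ζ f)
      atTop (𝓝 (R f)) := by
    intro f
    have haux : Tendsto (fun n => f + ζ • fres (b n • (1:L2op) + P n * T * P n) ζ f)
        atTop (𝓝 (f + ζ • gf f)) :=
      tendsto_const_nhds.add ((hgl f).const_smul ζ)
    rw [← hRf f] at haux
    apply Tendsto.congr' _ haux
    filter_upwards [eventually_gt_atTop N] with n hn
    rw [res_eq_one_add (hreg n hn).1, ContinuousLinearMap.add_apply,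
      ContinuousLinearMap.one_apply, ContinuousLinearMap.smul_apply]
  -- eventual bound on res S'ₙ
  have hresb : ∀ᶠ n in atTop, ‖res (b n • (1:L2op) + P n * T * P n) ζ‖ ≤ 1 + ‖ζ‖ * M := by
    filter_upwards [eventually_gt_atTop N] with n hn
    exact norm_res_le (hreg n hn).1 (hreg n hn).2
  -- first identity : (1 - ζ•T) ∘ R = 1
  have hid1 : ∀ f : L2, R f - ζ • T (R f) = f := by
    intro f
    have hseq : Tendsto (fun n => res (b n • (1:L2op) + P n * T * P n) ζ f
        - ζ • (b n • (1:L2op) + P n * T * P n) (res (b n • (1:L2op) + P n * T * P n) ζ f))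
        atTop (𝓝 (R f - ζ • T (R f))) := by
      apply Tendsto.sub (hRconv f)
      apply Tendsto.const_smul
      exact tendsto_apply_comp hS'b (hS't (R f)) (hRconv f)
    have hconst : ∀ᶠ n in atTop, res (b n • (1:L2op) + P n * T * P n) ζ f
        - ζ • (b n • (1:L2op) + P n * T * P n) (res (b n • (1:L2op) + P n * T * P n) ζ f)
        = f := by
      filter_upwards [eventually_gt_atTop N] with n hn
      have := congrArg (fun (S : L2op) => S f) (res_mul (hreg n hn).1)
      simp only [ContinuousLinearMap.mul_apply, ContinuousLinearMap.sub_apply,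
        ContinuousLinearMap.one_apply, ContinuousLinearMap.smul_apply] at this
      exact this
    have := tendsto_nhds_unique (hseq.congr' hconst) tendsto_const_nhds
    exact this
  -- second identity : R ∘ (1 - ζ•T) = 1
  have hid2 : ∀ f : L2, R (f - ζ • T f) = f := by
    intro f
    have hu : Tendsto (fun n => f - ζ • (b n • (1:L2op) + P n * T * P n) f)
        atTop (𝓝 (f - ζ • T f)) :=
      tendsto_const_nhds.sub ((hS't f).const_smul ζ)
    have hseq : Tendsto (fun n => res (b n • (1:L2op) + P n * T * P n) ζ
        (f - ζ • (b n • (1:L2op) + P n * T * P n) f))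
        atTop (𝓝 (R (f - ζ • T f))) := by
      apply tendsto_apply_comp hresb (hRconv (f - ζ • T f)) hu
    have hconst : ∀ᶠ n in atTop, res (b n • (1:L2op) + P n * T * P n) ζ
        (f - ζ • (b n • (1:L2op) + P n * T * P n) f) = f := by
      filter_upwards [eventually_gt_atTop N] with n hn
      have := congrArg (fun (S : L2op) => S f) (mul_res (hreg n hn).1)
      simp only [ContinuousLinearMap.mul_apply, ContinuousLinearMap.sub_apply,
        ContinuousLinearMap.one_apply, ContinuousLinearMap.smul_apply] at this
      rw [map_sub, _root_.map_smul] at this ⊢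
      exact this
    exact tendsto_nhds_unique (hseq.congr' hconst) tendsto_const_nhds
  -- conclude
  have hmul1 : (1 - ζ • T) * R = 1 := by
    apply ContinuousLinearMap.ext
    intro f
    simp only [ContinuousLinearMap.mul_apply, ContinuousLinearMap.sub_apply,
      ContinuousLinearMap.smul_apply, ContinuousLinearMap.one_apply]
    exact hid1 f
  have hmul2 : R * (1 - ζ • T) = 1 := by
    apply ContinuousLinearMap.ext
    intro f
    simp only [ContinuousLinearMap.mul_apply, ContinuousLinearMap.sub_apply,
      ContinuousLinearMap.smul_apply, ContinuousLinearMap.one_apply]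
    exact hid2 f
  exact (isUnit_and_inverse_eq hmul1 hmul2).1
lemma part1 (T : L2op) (P : ℕ → L2op) (b : ℕ → ℂ)
    (hPop : ∀ n, ‖P n‖ ≤ 1)
    (hPt : ∀ f : L2, Tendsto (fun n => P n f) atTop (𝓝 f))
    (hb : Tendsto b atTop (𝓝 (0:ℂ))) :
    (nablaS (fun n => b n • (1 : L2op) + P n * T)).Nonempty := by
  have hbnorm : Tendsto (fun n => ‖b n‖) atTop (𝓝 0) := by simpa using hb.norm
  set r : ℝ := (2 * (‖T‖ + 2))⁻¹ with hrdef
  have hrpos : 0 < r := by rw [hrdef]; positivity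
  set ζ : ℂ := (r : ℂ) with hζdef
  have hζne : ζ ≠ 0 := by
    rw [hζdef]; exact_mod_cast hrpos.ne'
  have hζnorm : ‖ζ‖ = r := by
    rw [hζdef, Complex.norm_real, Real.norm_eq_abs, abs_of_pos hrpos]
  obtain ⟨N₁, hN₁⟩ := eventually_atTop.mp
    ((NormedAddCommGroup.tendsto_nhds_zero.mp hb) 1 one_pos)
  -- operator norms
  have hSn : ∀ n, n ≥ N₁ → ‖b n • (1:L2op) + P n * T‖ ≤ 1 + ‖T‖ := by
    intro n hn
    calc ‖b n • (1:L2op) + P n * T‖ ≤ ‖b n • (1:L2op)‖ + ‖P n * T‖ := norm_add_le _ _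
      _ ≤ 1 + ‖T‖ := by
          apply add_le_add
          · rw [norm_smul (b n) (1:L2op)]
            calc ‖b n‖ * ‖(1:L2op)‖ ≤ 1 * 1 :=
                mul_le_mul (hN₁ n hn).le norm_one_L2op_le (norm_nonneg _) zero_le_one
              _ = 1 := one_mul 1
          · calc ‖P n * T‖ ≤ ‖P n‖ * ‖T‖ := norm_mul_le _ _
              _ ≤ 1 * ‖T‖ := mul_le_mul_of_nonneg_right (hPop n) (norm_nonneg _)
              _ = ‖T‖ := one_mul _
  have hhalf : r * (1 + ‖T‖) ≤ 1/2 := by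
    rw [hrdef, mul_comm, mul_inv_le_iff₀ (by positivity)]
    linarith [norm_nonneg T]
  have hxn : ∀ n, n ≥ N₁ → ‖ζ • (b n • (1:L2op) + P n * T)‖ ≤ 1/2 := by
    intro n hn
    rw [norm_smul ζ (b n • (1:L2op) + P n * T), hζnorm]
    calc r * ‖b n • (1:L2op) + P n * T‖ ≤ r * (1 + ‖T‖) :=
        mul_le_mul_of_nonneg_left (hSn n hn) hrpos.le
      _ ≤ 1/2 := hhalf
  have hunit : ∀ n, n ≥ N₁ → IsUnit (1 - ζ • (b n • (1:L2op) + P n * T)) := by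
    intro n hn
    exact (Units.oneSub _ (lt_of_le_of_lt (hxn n hn) (by norm_num))).isUnit
  have hresb : ∀ n, n ≥ N₁ → ‖res (b n • (1:L2op) + P n * T) ζ‖ ≤ 2 := by
    intro n hn
    exact norm_inverse_le (hxn n hn) (mul_res (hunit n hn))
  set M : ℝ := (1 + ‖T‖) * 2 with hMdef
  have hMpos : 0 < M := by rw [hMdef]; positivity
  have hfresb : ∀ n, n ≥ N₁ → ‖fres (b n • (1:L2op) + P n * T) ζ‖ ≤ M := by
    intro n hn
    calc ‖fres (b n • (1:L2op) + P n * T) ζ‖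
        ≤ ‖b n • (1:L2op) + P n * T‖ * ‖res (b n • (1:L2op) + P n * T) ζ‖ :=
          norm_mul_le _ _
      _ ≤ (1 + ‖T‖) * 2 := mul_le_mul (hSn n hn) (hresb n hn) (norm_nonneg _)
          (by positivity)
      _ = M := hMdef.symm
  -- facts about T itself
  have hxT : ‖ζ • T‖ ≤ 1/2 := by
    rw [norm_smul ζ T, hζnorm]
    calc r * ‖T‖ ≤ r * (1 + ‖T‖) := by
          apply mul_le_mul_of_nonneg_left _ hrpos.le
          linarith
      _ ≤ 1/2 := hhalf
  have hTu : IsUnit (1 - ζ • T) :=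
    (Units.oneSub _ (lt_of_le_of_lt hxT (by norm_num))).isUnit
  -- strong convergence of Sₙ to T
  have hSv : ∀ v : L2, Tendsto (fun n => (b n • (1:L2op) + P n * T) v)
      atTop (𝓝 (T v)) := by
    intro v
    have h1 : Tendsto (fun n => b n • v) atTop (𝓝 0) := by
      apply squeeze_zero_norm' (a := fun n => ‖b n‖ * ‖v‖)
      · exact Eventually.of_forall fun n => (norm_smul (b n) v).le
      · simpa using hbnorm.mul_const ‖v‖
    have h2 : Tendsto (fun n => P n (T v)) atTop (𝓝 (T v)) := hPt (T v)
    have h3 := h1.add h2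
    rw [zero_add] at h3
    apply Tendsto.congr _ h3
    intro n
    simp [ContinuousLinearMap.add_apply, ContinuousLinearMap.smul_apply,
      ContinuousLinearMap.mul_apply]
  -- convergence of the resolvents applied to f
  have hresconv : ∀ f : L2, Tendsto (fun n => res (b n • (1:L2op) + P n * T) ζ f)
      atTop (𝓝 (res T ζ f)) := by
    intro f
    set v := res T ζ f with hvdef
    have hfv : (1 - ζ • T) v = f := by
      have := congrArg (fun (S : L2op) => S f) (res_mul hTu)
      simpa only [ContinuousLinearMap.mul_apply, ContinuousLinearMap.one_apply] using this
    have key : ∀ᶠ n in atTop, res (b n • (1:L2op) + P n * T) ζ f - v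
        = ζ • (res (b n • (1:L2op) + P n * T) ζ
            ((b n • (1:L2op) + P n * T) v - T v)) := by
      filter_upwards [eventually_ge_atTop N₁] with n hn
      have e1 : res (b n • (1:L2op) + P n * T) ζ
          ((1 - ζ • (b n • (1:L2op) + P n * T)) v) = v := by
        have := congrArg (fun (S : L2op) => S v) (mul_res (hunit n hn))
        simpa only [ContinuousLinearMap.mul_apply, ContinuousLinearMap.one_apply] using this
      have e2 : (1 - ζ • T) v - (1 - ζ • (b n • (1:L2op) + P n * T)) v
          = ζ • ((b n • (1:L2op) + P n * T) v - T v) := by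
        simp only [ContinuousLinearMap.sub_apply, ContinuousLinearMap.smul_apply,
          ContinuousLinearMap.one_apply]
        rw [smul_sub]
        abel
      calc res (b n • (1:L2op) + P n * T) ζ f - v
          = res (b n • (1:L2op) + P n * T) ζ ((1 - ζ • T) v)
            - res (b n • (1:L2op) + P n * T) ζ
              ((1 - ζ • (b n • (1:L2op) + P n * T)) v) := by rw [hfv, e1]
        _ = res (b n • (1:L2op) + P n * T) ζ
              ((1 - ζ • T) v - (1 - ζ • (b n • (1:L2op) + P n * T)) v) := by
            rw [map_sub]
        _ = ζ • (res (b n • (1:L2op) + P n * T) ζ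
              ((b n • (1:L2op) + P n * T) v - T v)) := by
            rw [e2, _root_.map_smul]
    have hdiff : Tendsto (fun n => (b n • (1:L2op) + P n * T) v - T v) atTop (𝓝 0) := by
      have := (hSv v).sub (tendsto_const_nhds (x := T v))
      simpa using this
    have hzero : Tendsto (fun n => res (b n • (1:L2op) + P n * T) ζ f - v)
        atTop (𝓝 0) := by
      apply squeeze_zero_norm'
        (a := fun n => ‖ζ‖ * (2 * ‖(b n • (1:L2op) + P n * T) v - T v‖))
      · filter_upwards [key, eventually_ge_atTop N₁] with n hkey hn
        rw [hkey, norm_smul ζ (res (b n • (1:L2op) + P n * T) ζ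
          ((b n • (1:L2op) + P n * T) v - T v))]
        apply mul_le_mul_of_nonneg_left _ (norm_nonneg _)
        calc ‖res (b n • (1:L2op) + P n * T) ζ ((b n • (1:L2op) + P n * T) v - T v)‖
            ≤ ‖res (b n • (1:L2op) + P n * T) ζ‖
              * ‖(b n • (1:L2op) + P n * T) v - T v‖ := le_opNorm _ _
          _ ≤ 2 * ‖(b n • (1:L2op) + P n * T) v - T v‖ :=
              mul_le_mul_of_nonneg_right (hresb n hn) (norm_nonneg _)
      · have := (hdiff.norm.const_mul 2).const_mul ‖ζ‖
        simpa using this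
    have := hzero.add_const v
    simpa using this
  -- assemble
  refine ⟨ζ, ⟨hζne, M, hMpos, N₁, fun n hn => ⟨hunit n hn.le, hfresb n hn.le⟩⟩, ?_⟩
  intro f
  refine ⟨ζ⁻¹ • (res T ζ f - f), ?_⟩
  have haux : Tendsto (fun n => ζ⁻¹ • (res (b n • (1:L2op) + P n * T) ζ f - f))
      atTop (𝓝 (ζ⁻¹ • (res T ζ f - f))) :=
    ((hresconv f).sub (tendsto_const_nhds (x := f))).const_smul ζ⁻¹
  apply Tendsto.congr' _ haux
  filter_upwards [eventually_ge_atTop N₁] with n hn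
  rw [fres_eq hζne (hunit n hn)]
  rw [ContinuousLinearMap.smul_apply, ContinuousLinearMap.sub_apply,
    ContinuousLinearMap.one_apply]
theorem statement2 (T : L2op) (K : ℝ → ℝ → ℂ) (kt kt' : ℝ → L2)
    (hK : IsK0Kernel K kt kt') (hT : IsInducedBy T K)
    (tau : ℕ → ℝ) (P : ℕ → L2op) (hiv : ConditionIV K T tau P)
    (b : ℕ → ℂ) (hb : Tendsto b atTop (𝓝 (0 : ℂ))) :
    (nablaS (fun n => b n • (1 : L2op) + P n * T)).Nonempty ∧
    nablaS (fun n => b n • (1 : L2op) + P n * T) ⊆ nablaS (fun n => b n • (1 : L2op) + P n * T * P n) ∧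
    nablaS (fun n => b n • (1 : L2op) + P n * T * P n) ⊆ regularSet T := by
  have hidem : ∀ n, P n * P n = P n := fun n => P_idem (hiv.proj n)
  have hPle : ∀ n (f : L2), ‖P n f‖ ≤ ‖f‖ := fun n => norm_P_apply_le (hiv.proj n)
  have hPop : ∀ n, ‖P n‖ ≤ 1 := fun n =>
    (P n).opNorm_le_bound zero_le_one (fun f => by simpa using hPle n f)
  have hPt : ∀ f : L2, Tendsto (fun n => P n f) atTop (𝓝 f) :=
    P_tendsto hiv.tendsto_top hiv.proj
  exact ⟨part1 T P b hPop hPt hb, part2 T P b hidem hPop hPt hb,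
    part3 T P b hPop hPt hb⟩
end MainParts
end Pfacts
end AlgebraHelpers
end
end
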